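/- arXiv:1711.04756 — 2 statements merged into one kernel-verified Lean document; each statement's English description precedes it below -/
import Mathlib

section
/- Let s₁, s₂ be real numbers with s₁ > 0, s₂ > 0 and s₁ + s₂ > 1, let r₁, r₂ be positive integers, and let k₀ < k₁ < ⋯ < k_{r₂-1} be integers with 0 ≤ k₀ and k_{r₂-1} ≤ r₁ + r₂ - 1. Then the r₂ × r₂ determinant det_{0 ≤ i, j ≤ r₂-1} ( C(r₁, k_j - i) · (s₁ + i)_{k_j - i} / [ (s₁ + s₂ + i + k_j - 1)_{k_j - i} · (s₁ + s₂ + r₁ + 2i)_{k_j - i} ] ), where an entry is taken to be 0 when k_j - i < 0 or k_j - i > r₁, equals ∏_{0 ≤ i < j ≤ r₂-1} (k_j - k_i)(k_i + k_j + s₁ + s₂ - 1) times ∏_{i=0}^{r₂-1} [ (s₁)_{k_i} · Γ(s₁+s₂+r₁+2i-1) · Γ(s₁+s₂+r₁+2i) · (r₁+i)! · Γ(s₁+s₂+k_i-1) ] / [ (s₁)_i · Γ(s₁+s₂+r₁+i-1) · Γ(s₁+s₂+2k_i-1) · k_i! · (r₁+r₂-k_i-1)! · Γ(s₁+s₂+r₁+r₂+k_i-1)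 ]. -/
open Finset

noncomputable section

/-- The Pochhammer symbol `(a)_n = a (a+1) ⋯ (a+n-1)` for real `a`. -/
def poch (a : ℝ) (n : ℕ) : ℝ := Polynomial.eval a (ascPochhammer ℝ n)

/-- The entry `f(s₁,s₂,r,i,j)`, set to `0` when `j - i < 0` or `j - i > r`. -/
def fEnt (s₁ s₂ : ℝ) (r : ℕ) (i j : ℤ) : ℝ :=
  if 0 ≤ j - i ∧ j - i ≤ (r : ℤ) then
    (r.choose (j - i).toNat : ℝ) * poch (s₁ + i) (j - i).toNat /
      (poch (s₁ + s₂ + i + j - 1) (j - i).toNat * poch (s₁ + s₂ + r + 2 * i) (j - i).toNat)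
  else 0

def aaF (s₁ s₂ : ℝ) (r₁ : ℕ) : ℕ → ℝ := fun m => -(((r₁:ℝ)+m)*(s₁+s₂-1+((r₁:ℝ)+m)))
def bbF (s₁ s₂ : ℝ) : ℕ → ℝ := fun m => -((m:ℝ)*(s₁+s₂-1+(m:ℝ)))
def rowF (s₁ s₂ : ℝ) (r₁ N i : ℕ) : ℝ :=
  (-1:ℝ)^(N-i) * (Real.Gamma (s₁+s₂+r₁+2*(i:ℝ)) / Real.Gamma (s₁+(i:ℝ)))
def colF (s₁ s₂ : ℝ) (r₁ N κ : ℕ) : ℝ :=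
  (r₁.factorial:ℝ) * Real.Gamma (s₁+κ) * Real.Gamma (s₁+s₂+κ-1)
    / ((κ.factorial:ℝ) * ((r₁+N-κ).factorial:ℝ) * Real.Gamma (s₁+s₂+2*κ-1)
        * Real.Gamma (s₁+s₂+r₁+N+κ))
lemma poch_eq_prod (a : ℝ) (n : ℕ) : poch a n = ∏ m ∈ range n, (a + m) := by
  induction n with
  | zero => simp [poch]
  | succ n ih => rw [poch, ascPochhammer_succ_eval, ← poch, ih, prod_range_succ]

lemma poch_pos {a : ℝ} (ha : 0 < a) (n : ℕ) : 0 < poch a n := ascPochhammer_pos n a ha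

lemma poch_add (a : ℝ) (m n : ℕ) : poch a (m + n) = poch a m * poch (a + m) n := by
  rw [poch_eq_prod, poch_eq_prod, poch_eq_prod, prod_range_add]
  congr 1
  exact prod_congr rfl fun t _ => by push_cast; ring

lemma Gamma_poch {a : ℝ} (ha : 0 < a) (n : ℕ) :
    Real.Gamma (a + n) = poch a n * Real.Gamma a := by
  induction n with
  | zero => simp [poch]
  | succ n ih =>
    have h1 : a + (n+1 : ℕ) = (a + n) + 1 := by push_cast; ring
    rw [h1, Real.Gamma_add_one (by positivity), ih]
    rw [show poch a (n+1) = poch a n * (a + n) from by rw [poch, ascPochhammer_succ_eval]; rfl]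
    ring

lemma poch_one (n : ℕ) : poch 1 n = n.factorial := by
  rw [poch, ascPochhammer_eval_one]

lemma fact_poch (m n : ℕ) : ((m+n).factorial : ℝ) = m.factorial * poch ((m:ℝ)+1) n := by
  have := poch_add 1 m n
  rw [poch_one, poch_one] at this
  rw [this]; ring_nf

lemma entry_eq (s₁ s₂ : ℝ) (hs₁ : 0 < s₁) (hs : 1 < s₁ + s₂) (r₁ N : ℕ)
    (i κ : ℕ) (hi : i ≤ N) (hκ : κ ≤ r₁ + N) :
    fEnt s₁ s₂ r₁ (i : ℤ) (κ : ℤ)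
      = (Real.Gamma (s₁+s₂+r₁+2*i) / Real.Gamma (s₁+(i:ℝ)))
        * ((r₁.factorial : ℝ) * Real.Gamma (s₁+κ) * Real.Gamma (s₁+s₂+κ-1)
            / ((κ.factorial : ℝ) * ((r₁+N-κ).factorial : ℝ) * Real.Gamma (s₁+s₂+2*κ-1)
                * Real.Gamma (s₁+s₂+r₁+N+κ)))
        * ((∏ m ∈ Ico (i+1) (N+1),
              (((r₁:ℝ)+m)*(s₁+s₂-1+((r₁:ℝ)+m)) - (κ:ℝ)*((κ:ℝ)+s₁+s₂-1)))
          * ∏ m ∈ range i, ((κ:ℝ)*((κ:ℝ)+s₁+s₂-1) - (m:ℝ)*(s₁+s₂-1+(m:ℝ)))) := by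
  rcases lt_or_ge κ i with hb | hge
  · -- κ < i : both sides zero
    have hL : fEnt s₁ s₂ r₁ (i : ℤ) (κ : ℤ) = 0 := by
      rw [fEnt, if_neg]; push_neg; intro h; omega
    have hR : ∏ m ∈ range i, ((κ:ℝ)*((κ:ℝ)+s₁+s₂-1) - (m:ℝ)*(s₁+s₂-1+(m:ℝ))) = 0 := by
      apply Finset.prod_eq_zero (Finset.mem_range.mpr hb)
      ring
    rw [hL, hR]; ring
  rcases lt_or_ge (r₁ + i) κ with hc | hle
  · -- κ > r₁ + i : both sides zero
    have hL : fEnt s₁ s₂ r₁ (i : ℤ) (κ : ℤ) = 0 := by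
      rw [fEnt, if_neg]; push_neg; intro h; omega
    have hR : ∏ m ∈ Ico (i+1) (N+1),
        (((r₁:ℝ)+m)*(s₁+s₂-1+((r₁:ℝ)+m)) - (κ:ℝ)*((κ:ℝ)+s₁+s₂-1)) = 0 := by
      apply Finset.prod_eq_zero (i := κ - r₁) (Finset.mem_Ico.mpr ⟨by omega, by omega⟩)
      have : ((κ - r₁ : ℕ) : ℝ) = (κ:ℝ) - r₁ := by
        rw [Nat.cast_sub (by omega)]
      rw [this]; ring
    rw [hL, hR]; ring
  -- main case
  obtain ⟨d, rfl⟩ : ∃ d, κ = i + d := ⟨κ - i, by omega⟩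
  have hd : d ≤ r₁ := by omega
  have hc1 : (0:ℝ) < s₁ + s₂ - 1 := by linarith
  -- unfold fEnt
  have htn : (((i:ℕ)+d : ℤ) - (i:ℤ)).toNat = d := by omega
  rw [fEnt, if_pos (by constructor <;> [omega; omega])]
  rw [show (((i+d : ℕ) : ℤ) - (i:ℤ)) = (d : ℤ) by push_cast; ring]
  rw [show ((d:ℤ)).toNat = d from rfl]
  -- normalize casts in LHS
  rw [show (((i:ℕ):ℤ):ℝ) = (i:ℝ) by push_cast; ring,
      show (((i+d:ℕ):ℤ):ℝ) = (i:ℝ)+d by push_cast; ring]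
  -- product rewrites
  have P1 : (∏ m ∈ Ico (i+1) (N+1),
        (((r₁:ℝ)+m)*(s₁+s₂-1+((r₁:ℝ)+m)) - ((i+d:ℕ):ℝ)*(((i+d:ℕ):ℝ)+s₁+s₂-1)))
      = poch ((r₁:ℝ)-d+1) (N-i) * poch (s₁+s₂+r₁+2*(i:ℝ)+d) (N-i) := by
    rw [Finset.prod_Ico_eq_prod_range]
    have hNi : N + 1 - (i+1) = N - i := by omega
    rw [hNi, poch_eq_prod, poch_eq_prod, ← Finset.prod_mul_distrib]
    apply Finset.prod_congr rfl
    intro t _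
    push_cast
    ring
  have P2 : (∏ m ∈ range i,
        (((i+d:ℕ):ℝ)*(((i+d:ℕ):ℝ)+s₁+s₂-1) - (m:ℝ)*(s₁+s₂-1+(m:ℝ))))
      = poch ((d:ℝ)+1) i * poch (s₁+s₂+(i:ℝ)+d-1) i := by
    have step : ∀ m ∈ range i,
        (((i+d:ℕ):ℝ)*(((i+d:ℕ):ℝ)+s₁+s₂-1) - (m:ℝ)*(s₁+s₂-1+(m:ℝ)))
          = (((i+d:ℕ):ℝ) - m) * ((s₁+s₂+(i:ℝ)+d-1) + m) := by
      intro m _; push_cast; ring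
    rw [Finset.prod_congr rfl step, Finset.prod_mul_distrib]
    congr 1
    · rw [poch_eq_prod,
        ← Finset.prod_range_reflect (fun m => (((i+d:ℕ):ℝ) - m)) i]
      apply Finset.prod_congr rfl
      intro j hj
      have hj' : j < i := Finset.mem_range.mp hj
      have hcast : ((i-1-j : ℕ):ℝ) = (i:ℝ)-1-j := by
        rw [show i-1-j = i-(1+j) by omega, Nat.cast_sub (by omega)]
        push_cast; ring
      rw [hcast]; push_cast; ring
    · rw [poch_eq_prod]
  rw [P1, P2]
  have hi0 : (0:ℝ) ≤ (i:ℝ) := Nat.cast_nonneg i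
  have hd0 : (0:ℝ) ≤ (d:ℝ) := Nat.cast_nonneg d
  have hr0 : (0:ℝ) ≤ (r₁:ℝ) := Nat.cast_nonneg r₁
  have hdr : (d:ℝ) ≤ (r₁:ℝ) := by exact_mod_cast hd
  have g1 : Real.Gamma (s₁ + ((i+d:ℕ):ℝ))
      = poch (s₁+(i:ℝ)) d * Real.Gamma (s₁+(i:ℝ)) := by
    rw [show s₁ + ((i+d:ℕ):ℝ) = (s₁+(i:ℝ)) + ((d:ℕ):ℝ) by push_cast; ring,
      Gamma_poch (by linarith)]
  have g2 : Real.Gamma (s₁+s₂+((i+d:ℕ):ℝ)-1) = Real.Gamma (s₁+s₂+(i:ℝ)+(d:ℝ)-1) := by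
    congr 1; push_cast; ring
  have g3 : Real.Gamma (s₁+s₂+2*((i+d:ℕ):ℝ)-1)
      = poch (s₁+s₂+(i:ℝ)+((i:ℝ)+(d:ℝ))-1) d
        * (poch (s₁+s₂+(i:ℝ)+(d:ℝ)-1) i * Real.Gamma (s₁+s₂+(i:ℝ)+(d:ℝ)-1)) := by
    rw [show s₁+s₂+2*((i+d:ℕ):ℝ)-1 = (s₁+s₂+(i:ℝ)+((i:ℝ)+(d:ℝ))-1) + ((d:ℕ):ℝ)
        by push_cast; ring,
      Gamma_poch (by linarith)]
    congr 1
    rw [show s₁+s₂+(i:ℝ)+((i:ℝ)+(d:ℝ))-1 = (s₁+s₂+(i:ℝ)+(d:ℝ)-1) + ((i:ℕ):ℝ)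
        by push_cast; ring,
      Gamma_poch (by linarith)]
  have g4 : Real.Gamma (s₁+s₂+(r₁:ℝ)+(N:ℝ)+((i+d:ℕ):ℝ))
      = poch (s₁+s₂+(r₁:ℝ)+2*(i:ℝ)+(d:ℝ)) (N-i)
        * (poch (s₁+s₂+(r₁:ℝ)+2*(i:ℝ)) d * Real.Gamma (s₁+s₂+(r₁:ℝ)+2*(i:ℝ))) := by
    rw [show s₁+s₂+(r₁:ℝ)+(N:ℝ)+((i+d:ℕ):ℝ)
          = (s₁+s₂+(r₁:ℝ)+2*(i:ℝ)+(d:ℝ)) + ((N-i:ℕ):ℝ) by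
        rw [Nat.cast_sub hi]; push_cast; ring,
      Gamma_poch (by linarith)]
    congr 1
    rw [show s₁+s₂+(r₁:ℝ)+2*(i:ℝ)+(d:ℝ) = (s₁+s₂+(r₁:ℝ)+2*(i:ℝ)) + ((d:ℕ):ℝ)
        by push_cast; ring,
      Gamma_poch (by linarith)]
  have f1 : (((i+d).factorial:ℕ):ℝ) = (d.factorial:ℝ) * poch ((d:ℝ)+1) i := by
    rw [show i+d = d+i by omega, fact_poch]
  have f2 : (((r₁+N-(i+d)).factorial:ℕ):ℝ)
      = ((r₁-d).factorial:ℝ) * poch ((r₁:ℝ)-(d:ℝ)+1) (N-i) := by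
    rw [show r₁+N-(i+d) = (r₁-d)+(N-i) by omega, fact_poch,
      show (((r₁-d:ℕ)):ℝ) = (r₁:ℝ)-(d:ℝ) by rw [Nat.cast_sub hd]]
  have f3 : ((r₁.factorial:ℕ):ℝ)
      = (r₁.choose d : ℝ) * ((d.factorial:ℝ) * ((r₁-d).factorial:ℝ)) := by
    rw [← Nat.choose_mul_factorial_mul_factorial hd]; push_cast; ring
  rw [g1, g2, g3, g4, f1, f2, f3]
  have n1 : Real.Gamma (s₁+(i:ℝ)) ≠ 0 := ne_of_gt (Real.Gamma_pos_of_pos (by linarith))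
  have n2 : Real.Gamma (s₁+s₂+(i:ℝ)+(d:ℝ)-1) ≠ 0 :=
    ne_of_gt (Real.Gamma_pos_of_pos (by linarith))
  have n3 : Real.Gamma (s₁+s₂+(r₁:ℝ)+2*(i:ℝ)) ≠ 0 :=
    ne_of_gt (Real.Gamma_pos_of_pos (by linarith))
  have n4 : poch (s₁+s₂+(i:ℝ)+((i:ℝ)+(d:ℝ))-1) d ≠ 0 := ne_of_gt (poch_pos (by linarith) d)
  have n5 : poch (s₁+s₂+(r₁:ℝ)+2*(i:ℝ)) d ≠ 0 := ne_of_gt (poch_pos (by linarith) d)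
  have n6 : poch ((d:ℝ)+1) i ≠ 0 := ne_of_gt (poch_pos (by linarith) i)
  have n7 : poch ((r₁:ℝ)-(d:ℝ)+1) (N-i) ≠ 0 := ne_of_gt (poch_pos (by linarith) (N-i))
  have n8 : poch (s₁+s₂+(i:ℝ)+(d:ℝ)-1) i ≠ 0 := ne_of_gt (poch_pos (by linarith) i)
  have n9 : poch (s₁+s₂+(r₁:ℝ)+2*(i:ℝ)+(d:ℝ)) (N-i) ≠ 0 :=
    ne_of_gt (poch_pos (by linarith) (N-i))
  have n10 : (d.factorial:ℝ) ≠ 0 := by positivity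
  have n11 : ((r₁-d).factorial:ℝ) ≠ 0 := by positivity
  field_simp
  have n9' : poch (s₁ + s₂ + (r₁:ℝ) + (i:ℝ) * 2 + (d:ℝ)) (N - i) ≠ 0 := by
    convert n9 using 2 <;> ring
  rw [mul_div_mul_right _ _ n9']
def kmat (N : ℕ) (x : Fin (N+1) → ℝ) (a b : ℕ → ℝ) (t : ℕ) :
    Matrix (Fin (N+1)) (Fin (N+1)) ℝ :=
  fun i j => (∏ m ∈ Ico ((i:ℕ)+1) (N+1), (x j + a m)) * ∏ m ∈ range ((i:ℕ) - t), (x j + b m)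

lemma kmat_step (N : ℕ) (x : Fin (N+1) → ℝ) (a b : ℕ → ℝ) (t : ℕ) :
    (kmat N x a b t).det
      = (∏ i ∈ Ico (t+1) (N+1), (b (i-1-t) - a i)) * (kmat N x a b (t+1)).det := by
  set Bm : Matrix (Fin (N+1)) (Fin (N+1)) ℝ :=
    Matrix.of (fun i j => (if t+1 ≤ (i:ℕ) then (b ((i:ℕ)-1-t) - a i) else 1)
      * kmat N x a b (t+1) i j) with hBm
  have h1 : (kmat N x a b t).det = Bm.det := by
    apply Matrix.det_eq_of_forall_row_eq_smul_add_pred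
      (c := fun i : Fin N => if t ≤ (i:ℕ) then 1 else 0)
    · intro j
      simp only [hBm, Matrix.of_apply, kmat, Fin.val_zero]
      norm_num
    · intro i j
      have hiv : (i : ℕ) < N := i.isLt
      have hsv : ((i.succ : Fin (N+1)) : ℕ) = (i:ℕ)+1 := rfl
      have hcv : ((i.castSucc : Fin (N+1)) : ℕ) = (i:ℕ) := rfl
      by_cases ht : t ≤ (i:ℕ)
      · simp only [hBm, Matrix.of_apply, kmat, hsv, hcv, if_pos ht, if_pos (by omega : t+1 ≤ (i:ℕ)+1)]
        have e1 : (i:ℕ)+1-t = ((i:ℕ)-t)+1 := by omega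
        have e2 : (i:ℕ)+1-(t+1) = (i:ℕ)-t := by omega
        have e3 : (i:ℕ)+1-1-t = (i:ℕ)-t := by omega
        rw [e1, e2, e3, prod_range_succ]
        rw [Finset.prod_eq_prod_Ico_succ_bot (by omega : (i:ℕ)+1 < N+1) (fun m => x j + a m)]
        ring
      · simp only [hBm, Matrix.of_apply, kmat, hsv, hcv, if_neg ht,
          if_neg (by omega : ¬ t+1 ≤ (i:ℕ)+1)]
        have e2 : (i:ℕ)+1-(t+1) = (i:ℕ)+1-t := by omega
        rw [e2]; ring
  rw [h1, hBm, Matrix.det_mul_column]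
  congr 1
  rw [Fin.prod_univ_eq_prod_range (fun n => if t+1 ≤ n then (b (n-1-t) - a n) else 1) (N+1),
    Finset.prod_ite, Finset.prod_const_one, mul_one]
  apply Finset.prod_congr
  · ext n; simp only [mem_filter, mem_range, mem_Ico]; omega
  · intros; rfl

lemma pair_prod_eq (n : ℕ) (f : Fin n → Fin n → ℝ) :
    ∏ p ∈ Finset.univ.filter (fun p : Fin n × Fin n => p.1 < p.2), f p.1 p.2
      = ∏ i : Fin n, ∏ j ∈ Ioi i, f i j := by
  rw [Finset.prod_sigma']
  refine Finset.prod_bij' (fun p _ => ((⟨p.1, p.2⟩ : Σ _ : Fin n, Fin n)))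
    (fun p _ => (p.1, p.2)) ?_ ?_ ?_ ?_ ?_ <;>
    simp [Finset.mem_sigma, Finset.mem_filter, Finset.mem_Ioi]

lemma pair_prod_rev (n : ℕ) (f : Fin n → Fin n → ℝ) :
    ∏ i : Fin n, ∏ j ∈ Ioi i, f (Fin.rev j) (Fin.rev i)
      = ∏ i : Fin n, ∏ j ∈ Ioi i, f i j := by
  rw [← pair_prod_eq, ← pair_prod_eq]
  refine Finset.prod_bij' (fun p _ => (Fin.rev p.2, Fin.rev p.1))
    (fun p _ => (Fin.rev p.2, Fin.rev p.1)) ?_ ?_ ?_ ?_ ?_ <;>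
    simp [Finset.mem_filter, Fin.rev_lt_rev]

lemma kmat_base (N : ℕ) (x : Fin (N+1) → ℝ) (a b : ℕ → ℝ) :
    (kmat N x a b N).det = ∏ i : Fin (N+1), ∏ j ∈ Ioi i, (x i - x j) := by
  have hk : kmat N x a b N
      = Matrix.of (fun i j : Fin (N+1) => ∏ m ∈ Ico ((i:ℕ)+1) (N+1), (x j + a m)) := by
    funext i j
    have : (i:ℕ) - N = 0 := by omega
    simp [kmat, this]
  rw [hk]
  set p : Fin (N+1) → Polynomial ℝ :=
    fun i => ∏ m ∈ Ico ((N-(i:ℕ))+1) (N+1), (Polynomial.X + Polynomial.C (a m)) with hp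
  have hmon : ∀ i, (p i).Monic := fun i =>
    Polynomial.monic_prod_of_monic _ _ fun m _ => Polynomial.monic_X_add_C (a m)
  have hdeg : ∀ i : Fin (N+1), (p i).natDegree = (i:ℕ) := by
    intro i
    rw [hp, Polynomial.natDegree_prod_of_monic _ _ (fun m _ => Polynomial.monic_X_add_C (a m))]
    simp only [Polynomial.natDegree_X_add_C, Finset.sum_const, Nat.card_Ico, smul_eq_mul, mul_one]
    omega
  have heval : ∀ (i j : Fin (N+1)),
      (p i).eval (x j) = ∏ m ∈ Ico ((N-(i:ℕ))+1) (N+1), (x j + a m) := by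
    intro i j
    rw [hp]
    simp [Polynomial.eval_prod]
  have key := Matrix.det_eval_matrixOfPolynomials_eq_det_vandermonde
    (fun i => x (Fin.rev i)) p hdeg hmon
  have h2 : (Matrix.det (Matrix.of (fun i j : Fin (N+1) => ∏ m ∈ Ico ((i:ℕ)+1) (N+1), (x j + a m))))
      = Matrix.det (Matrix.of (fun i j : Fin (N+1) => (p j).eval (x (Fin.rev i)))) := by
    rw [← Matrix.det_transpose (Matrix.of (fun i j : Fin (N+1) => (p j).eval (x (Fin.rev i)))),
      ← Matrix.det_submatrix_equiv_self (Fin.revPerm : Fin (N+1) ≃ Fin (N+1))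
        (Matrix.transpose (Matrix.of (fun i j : Fin (N+1) => (p j).eval (x (Fin.rev i)))))]
    congr 1
    funext i j
    simp only [Matrix.submatrix_apply, Matrix.transpose_apply, Matrix.of_apply, Fin.revPerm_apply,
      Fin.rev_rev, heval]
    have hrev : ((Fin.rev i : Fin (N+1)) : ℕ) = N - (i:ℕ) := by
      rw [Fin.val_rev]; omega
    congr 2
    omega
  rw [hk] at *
  rw [h2, ← key, Matrix.det_vandermonde]
  rw [← pair_prod_rev (N+1) (fun i j => x i - x j)]

lemma kratt (N : ℕ) (x : Fin (N+1) → ℝ) (a b : ℕ → ℝ) :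
    (kmat N x a b 0).det
      = (∏ t ∈ range N, ∏ i ∈ Ico (t+1) (N+1), (b (i-1-t) - a i))
        * ∏ i : Fin (N+1), ∏ j ∈ Ioi i, (x i - x j) := by
  have main : ∀ d t, t + d = N → (kmat N x a b t).det
      = (∏ t' ∈ Ico t N, ∏ i ∈ Ico (t'+1) (N+1), (b (i-1-t') - a i))
        * ∏ i : Fin (N+1), ∏ j ∈ Ioi i, (x i - x j) := by
    intro d
    induction d with
    | zero => intro t ht; simp only [Nat.add_zero] at ht; subst ht
              rw [Ico_self, prod_empty, one_mul, kmat_base]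
    | succ d ih =>
      intro t ht
      rw [kmat_step, ih (t+1) (by omega)]
      rw [← mul_assoc]
      congr 1
      rw [← Finset.prod_eq_prod_Ico_succ_bot (by omega : t < N)
        (fun t' => ∏ i ∈ Ico (t'+1) (N+1), (b (i-1-t') - a i))]
  have := main N 0 (by omega)
  rwa [show Ico 0 N = range N by rw [Finset.range_eq_Ico]] at this
lemma triangle_swap (n : ℕ) (f : ℕ → ℕ → ℝ) :
    ∏ t ∈ range n, ∏ i ∈ Ico (t+1) (n+1), f t i
      = ∏ q ∈ Ico 1 (n+1), ∏ t ∈ range q, f t q := by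
  rw [Finset.prod_sigma', Finset.prod_sigma']
  refine Finset.prod_bij' (fun p _ => (⟨p.2, p.1⟩ : Σ _ : ℕ, ℕ))
    (fun p _ => (⟨p.2, p.1⟩ : Σ _ : ℕ, ℕ)) ?_ ?_ ?_ ?_ ?_ <;>
    simp only [Finset.mem_sigma, Finset.mem_range, Finset.mem_Ico] <;>
    first
      | (intro a ha; omega)
      | (intro a ha; rfl)
      | (intro a ha; trivial)

lemma final_col (s₁ s₂ : ℝ) (hs₁ : 0 < s₁) (hs : 1 < s₁ + s₂) (r₁ N : ℕ)
    (i κ : ℕ) (hi : i ≤ N) (hκ : κ ≤ r₁ + N) :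
    (Real.Gamma (s₁+s₂+r₁+2*(i:ℝ)) / Real.Gamma (s₁+(i:ℝ)))
      * ((r₁.factorial : ℝ) * Real.Gamma (s₁+κ) * Real.Gamma (s₁+s₂+κ-1)
          / ((κ.factorial : ℝ) * ((r₁+N-κ).factorial : ℝ) * Real.Gamma (s₁+s₂+2*κ-1)
              * Real.Gamma (s₁+s₂+r₁+N+κ)))
      * (∏ p ∈ range i,
          (((r₁:ℝ)+i)*(s₁+s₂-1+((r₁:ℝ)+i)) - (p:ℝ)*(s₁+s₂-1+(p:ℝ))))
    = (poch s₁ κ * Real.Gamma (s₁ + s₂ + r₁ + 2 * (i:ℝ) - 1) *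
        Real.Gamma (s₁ + s₂ + r₁ + 2 * (i:ℝ)) * ((r₁ + i).factorial : ℝ) *
        Real.Gamma (s₁ + s₂ + (κ:ℝ) - 1)) /
      (poch s₁ i * Real.Gamma (s₁ + s₂ + r₁ + (i:ℝ) - 1) *
        Real.Gamma (s₁ + s₂ + 2 * (κ:ℝ) - 1) * Real.Gamma ((κ:ℝ) + 1) *
        Real.Gamma ((r₁ : ℝ) + (N+1:ℕ) - (κ:ℝ)) *
        Real.Gamma (s₁ + s₂ + r₁ + (N+1:ℕ) + (κ:ℝ) - 1)) := by
  have hi0 : (0:ℝ) ≤ (i:ℝ) := Nat.cast_nonneg i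
  have hk0 : (0:ℝ) ≤ (κ:ℝ) := Nat.cast_nonneg κ
  have hr0 : (0:ℝ) ≤ (r₁:ℝ) := Nat.cast_nonneg r₁
  have hN0 : (0:ℝ) ≤ (N:ℝ) := Nat.cast_nonneg N
  have P : (∏ p ∈ range i,
        (((r₁:ℝ)+i)*(s₁+s₂-1+((r₁:ℝ)+i)) - (p:ℝ)*(s₁+s₂-1+(p:ℝ))))
      = poch ((r₁:ℝ)+1) i * poch (s₁+s₂+r₁+(i:ℝ)-1) i := by
    have step : ∀ p ∈ range i,
        (((r₁:ℝ)+i)*(s₁+s₂-1+((r₁:ℝ)+i)) - (p:ℝ)*(s₁+s₂-1+(p:ℝ)))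
          = (((r₁:ℝ)+i) - p) * ((s₁+s₂+r₁+(i:ℝ)-1) + p) := by
      intro p _; push_cast; ring
    rw [Finset.prod_congr rfl step, Finset.prod_mul_distrib]
    congr 1
    · rw [poch_eq_prod, ← Finset.prod_range_reflect (fun p => (((r₁:ℝ)+i) - p)) i]
      apply Finset.prod_congr rfl
      intro j hj
      have hj' : j < i := Finset.mem_range.mp hj
      have hcast : ((i-1-j : ℕ):ℝ) = (i:ℝ)-1-j := by
        rw [show i-1-j = i-(1+j) by omega, Nat.cast_sub (by omega)]
        push_cast; ring
      rw [hcast]; push_cast; ring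
    · rw [poch_eq_prod]
  rw [P]
  have g1 : Real.Gamma (s₁+(κ:ℝ)) = poch s₁ κ * Real.Gamma s₁ := Gamma_poch hs₁ κ
  have g2 : Real.Gamma (s₁+(i:ℝ)) = poch s₁ i * Real.Gamma s₁ := Gamma_poch hs₁ i
  have g3 : Real.Gamma (s₁+s₂+r₁+2*(i:ℝ)-1)
      = poch (s₁+s₂+r₁+(i:ℝ)-1) i * Real.Gamma (s₁+s₂+r₁+(i:ℝ)-1) := by
    rw [show s₁+s₂+r₁+2*(i:ℝ)-1 = (s₁+s₂+r₁+(i:ℝ)-1) + ((i:ℕ):ℝ) by push_cast; ring,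
      Gamma_poch (by linarith)]
  have g4 : ((r₁+i).factorial : ℝ) = (r₁.factorial:ℝ) * poch ((r₁:ℝ)+1) i := fact_poch r₁ i
  have g5 : Real.Gamma ((κ:ℝ)+1) = (κ.factorial : ℝ) := Real.Gamma_nat_eq_factorial κ
  have g6 : Real.Gamma ((r₁:ℝ) + ((N+1:ℕ):ℝ) - (κ:ℝ)) = ((r₁+N-κ).factorial : ℝ) := by
    rw [show (r₁:ℝ) + ((N+1:ℕ):ℝ) - (κ:ℝ) = ((r₁+N-κ:ℕ):ℝ) + 1 by
        rw [Nat.cast_sub (by omega)]; push_cast; ring]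
    exact Real.Gamma_nat_eq_factorial _
  have g7 : Real.Gamma (s₁+s₂+r₁+((N+1:ℕ):ℝ)+(κ:ℝ)-1) = Real.Gamma (s₁+s₂+r₁+N+κ) := by
    congr 1; push_cast; ring
  rw [g1, g2, g3, g4, g5, g6, g7]
  have n0 : Real.Gamma s₁ ≠ 0 := ne_of_gt (Real.Gamma_pos_of_pos hs₁)
  have n1 : poch s₁ i ≠ 0 := ne_of_gt (poch_pos hs₁ i)
  have n2 : Real.Gamma (s₁+s₂+r₁+(i:ℝ)-1) ≠ 0 :=
    ne_of_gt (Real.Gamma_pos_of_pos (by linarith))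
  have n3 : Real.Gamma (s₁+s₂+2*(κ:ℝ)-1) ≠ 0 :=
    ne_of_gt (Real.Gamma_pos_of_pos (by linarith))
  have n4 : Real.Gamma (s₁+s₂+r₁+(N:ℝ)+(κ:ℝ)) ≠ 0 :=
    ne_of_gt (Real.Gamma_pos_of_pos (by linarith))
  have n5 : (κ.factorial : ℝ) ≠ 0 := by positivity
  have n6 : ((r₁+N-κ).factorial : ℝ) ≠ 0 := by positivity
  field_simp

lemma entry_eq2 (s₁ s₂ : ℝ) (hs₁ : 0 < s₁) (hs : 1 < s₁ + s₂) (r₁ N : ℕ)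
    (i κ : ℕ) (hi : i ≤ N) (hκ : κ ≤ r₁ + N) :
    fEnt s₁ s₂ r₁ (i : ℤ) (κ : ℤ)
      = rowF s₁ s₂ r₁ N i * (colF s₁ s₂ r₁ N κ
          * ((∏ m ∈ Ico (i+1) (N+1), ((κ:ℝ)*((κ:ℝ)+s₁+s₂-1) + aaF s₁ s₂ r₁ m))
            * ∏ m ∈ range i, ((κ:ℝ)*((κ:ℝ)+s₁+s₂-1) + bbF s₁ s₂ m))) := by
  rw [entry_eq s₁ s₂ hs₁ hs r₁ N i κ hi hκ]
  have e1 : (∏ m ∈ Ico (i+1) (N+1), ((κ:ℝ)*((κ:ℝ)+s₁+s₂-1) + aaF s₁ s₂ r₁ m))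
      = (-1:ℝ)^(N-i) * ∏ m ∈ Ico (i+1) (N+1),
          (((r₁:ℝ)+m)*(s₁+s₂-1+((r₁:ℝ)+m)) - (κ:ℝ)*((κ:ℝ)+s₁+s₂-1)) := by
    rw [show ((-1:ℝ)^(N-i)) = ∏ m ∈ Ico (i+1) (N+1), (-1:ℝ) by
        rw [prod_const, Nat.card_Ico]; congr 1; omega,
      ← Finset.prod_mul_distrib]
    apply Finset.prod_congr rfl; intro m _; simp only [aaF]; ring
  have e2 : (∏ m ∈ range i, ((κ:ℝ)*((κ:ℝ)+s₁+s₂-1) + bbF s₁ s₂ m))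
      = ∏ m ∈ range i, ((κ:ℝ)*((κ:ℝ)+s₁+s₂-1) - (m:ℝ)*(s₁+s₂-1+(m:ℝ))) := by
    apply Finset.prod_congr rfl; intro m _; simp only [bbF]; ring
  rw [e1, e2, rowF, colF]
  set G := Real.Gamma (s₁+s₂+(r₁:ℝ)+2*(i:ℝ)) / Real.Gamma (s₁+(i:ℝ)) with hG
  set C := (r₁.factorial:ℝ) * Real.Gamma (s₁+(κ:ℝ)) * Real.Gamma (s₁+s₂+(κ:ℝ)-1)
    / ((κ.factorial:ℝ) * ((r₁+N-κ).factorial:ℝ) * Real.Gamma (s₁+s₂+2*(κ:ℝ)-1)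
        * Real.Gamma (s₁+s₂+(r₁:ℝ)+(N:ℝ)+(κ:ℝ))) with hC
  set P := ∏ m ∈ Ico (i+1) (N+1),
      (((r₁:ℝ)+m)*(s₁+s₂-1+((r₁:ℝ)+m)) - (κ:ℝ)*((κ:ℝ)+s₁+s₂-1)) with hP
  set Q := ∏ m ∈ range i, ((κ:ℝ)*((κ:ℝ)+s₁+s₂-1) - (m:ℝ)*(s₁+s₂-1+(m:ℝ))) with hQ
  have hsq : ((-1:ℝ)^(N-i)) * ((-1:ℝ)^(N-i)) = 1 := by
    rw [← pow_add]
    exact Even.neg_one_pow ⟨N-i, rfl⟩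
  rw [show ((-1:ℝ)^(N-i) * G) * (C * (((-1:ℝ)^(N-i) * P) * Q))
      = ((-1:ℝ)^(N-i) * (-1:ℝ)^(N-i)) * (G * C * (P * Q)) by ring, hsq, one_mul]

open Real in
theorem det_lemma_one (s₁ s₂ : ℝ) (hs₁ : 0 < s₁) (hs₂ : 0 < s₂) (hs : 1 < s₁ + s₂)
    (r₁ r₂ : ℕ) (hr₁ : 0 < r₁) (hr₂ : 0 < r₂) (k : Fin r₂ → ℤ) (hk : StrictMono k)
    (hk0 : ∀ i, 0 ≤ k i) (hk1 : ∀ i, k i ≤ (r₁ : ℤ) + r₂ - 1) :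
    (Matrix.det (fun i j : Fin r₂ => fEnt s₁ s₂ r₁ (i : ℕ) (k j))) =
      (∏ p ∈ Finset.univ.filter (fun p : Fin r₂ × Fin r₂ => p.1 < p.2),
        (((k p.2 : ℝ) - (k p.1 : ℝ)) * ((k p.1 : ℝ) + (k p.2 : ℝ) + s₁ + s₂ - 1))) *
      ∏ i : Fin r₂,
        (poch s₁ (k i).toNat * Real.Gamma (s₁ + s₂ + r₁ + 2 * (i : ℕ) - 1) *
          Real.Gamma (s₁ + s₂ + r₁ + 2 * (i : ℕ)) * (r₁ + (i : ℕ)).factorial *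
          Real.Gamma (s₁ + s₂ + (k i : ℝ) - 1)) /
        (poch s₁ (i : ℕ) * Real.Gamma (s₁ + s₂ + r₁ + (i : ℕ) - 1) *
          Real.Gamma (s₁ + s₂ + 2 * (k i : ℝ) - 1) * Real.Gamma ((k i : ℝ) + 1) *
          Real.Gamma ((r₁ : ℝ) + r₂ - (k i : ℝ)) *
          Real.Gamma (s₁ + s₂ + r₁ + r₂ + (k i : ℝ) - 1)) := by
  obtain ⟨N, rfl⟩ : ∃ N, r₂ = N + 1 := ⟨r₂ - 1, by omega⟩
  have hkR : ∀ j : Fin (N+1), ((k j : ℤ) : ℝ) = (((k j).toNat : ℕ) : ℝ) := by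
    intro j
    have := Int.toNat_of_nonneg (hk0 j)
    exact_mod_cast congrArg (fun z : ℤ => (z:ℝ)) this.symm
  have hκle : ∀ j : Fin (N+1), (k j).toNat ≤ r₁ + N := by
    intro j; have h1 := hk1 j; have h2 := hk0 j; omega
  simp only [hkR]
  set xv : Fin (N+1) → ℝ :=
    fun j => (((k j).toNat : ℕ):ℝ) * ((((k j).toNat : ℕ):ℝ) + s₁ + s₂ - 1) with hxv
  have Mmat : (fun i j : Fin (N+1) => fEnt s₁ s₂ r₁ ((i:ℕ) : ℤ) (k j))
      = Matrix.of (fun i j : Fin (N+1) => rowF s₁ s₂ r₁ N (i:ℕ) *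
          (Matrix.of (fun i j : Fin (N+1) => colF s₁ s₂ r₁ N ((k j).toNat) *
            kmat N xv (aaF s₁ s₂ r₁) (bbF s₁ s₂) 0 i j)) i j) := by
    funext i j
    rw [show k j = (((k j).toNat : ℕ) : ℤ) from (Int.toNat_of_nonneg (hk0 j)).symm]
    exact entry_eq2 s₁ s₂ hs₁ hs r₁ N (i:ℕ) ((k j).toNat) (by omega) (hκle j)
  rw [Mmat, Matrix.det_mul_column, Matrix.det_mul_row, kratt]
  rw [pair_prod_eq (N+1) (fun i j : Fin (N+1) =>
    (((((k j).toNat : ℕ):ℝ)) - ((((k i).toNat : ℕ):ℝ))) *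
      (((((k i).toNat : ℕ):ℝ)) + ((((k j).toNat : ℕ):ℝ)) + s₁ + s₂ - 1))]
  have hrowf : ∏ i : Fin (N+1), rowF s₁ s₂ r₁ N (i:ℕ)
      = (∏ i : Fin (N+1), (-1:ℝ)^(N-(i:ℕ)))
        * ∏ i : Fin (N+1),
            (Real.Gamma (s₁+s₂+r₁+2*((i:ℕ):ℝ)) / Real.Gamma (s₁+((i:ℕ):ℝ))) := by
    rw [← Finset.prod_mul_distrib]
    exact Finset.prod_congr rfl fun i _ => rfl
  have hpair : ∏ i : Fin (N+1), ∏ j ∈ Ioi i,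
        ((((((k j).toNat : ℕ):ℝ)) - ((((k i).toNat : ℕ):ℝ))) *
          (((((k i).toNat : ℕ):ℝ)) + ((((k j).toNat : ℕ):ℝ)) + s₁ + s₂ - 1))
      = (∏ i : Fin (N+1), (-1:ℝ)^(N-(i:ℕ)))
        * ∏ i : Fin (N+1), ∏ j ∈ Ioi i, (xv i - xv j) := by
    rw [← Finset.prod_mul_distrib]
    apply Finset.prod_congr rfl
    intro i _
    rw [show ((-1:ℝ)^(N-(i:ℕ))) = ∏ j ∈ Ioi i, (-1:ℝ) by
        rw [prod_const, Fin.card_Ioi]; congr 1 <;> omega,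
      ← Finset.prod_mul_distrib]
    apply Finset.prod_congr rfl
    intro j _
    simp only [hxv]
    ring
  have hF : (∏ t ∈ range N, ∏ i' ∈ Ico (t+1) (N+1),
        (bbF s₁ s₂ (i'-1-t) - aaF s₁ s₂ r₁ i'))
      = ∏ q : Fin (N+1), ∏ p ∈ range (q:ℕ), (bbF s₁ s₂ p - aaF s₁ s₂ r₁ (q:ℕ)) := by
    rw [triangle_swap,
      Fin.prod_univ_eq_prod_range (fun q => ∏ p ∈ range q, (bbF s₁ s₂ p - aaF s₁ s₂ r₁ q))
        (N+1)]
    calc ∏ q ∈ Ico 1 (N+1), ∏ t ∈ range q, (bbF s₁ s₂ (q-1-t) - aaF s₁ s₂ r₁ q)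
        = ∏ q ∈ Ico 1 (N+1), ∏ p ∈ range q, (bbF s₁ s₂ p - aaF s₁ s₂ r₁ q) :=
          Finset.prod_congr rfl fun q _ =>
            Finset.prod_range_reflect (fun p => bbF s₁ s₂ p - aaF s₁ s₂ r₁ q) q
      _ = ∏ q ∈ range (N+1), ∏ p ∈ range q, (bbF s₁ s₂ p - aaF s₁ s₂ r₁ q) := by
          refine Finset.prod_subset ?_ ?_
          · intro x hx
            simp only [mem_Ico] at hx
            simp only [mem_range]
            omega
          · intro x hx hnx
            have hx0 : x = 0 := by
              simp only [mem_range] at hx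
              simp only [mem_Ico] at hnx
              omega
            simp [hx0]
  have hmain : (∏ i : Fin (N+1),
        (Real.Gamma (s₁+s₂+r₁+2*((i:ℕ):ℝ)) / Real.Gamma (s₁+((i:ℕ):ℝ))))
      * ((∏ j : Fin (N+1), colF s₁ s₂ r₁ N ((k j).toNat))
        * ∏ t ∈ range N, ∏ i' ∈ Ico (t+1) (N+1),
            (bbF s₁ s₂ (i'-1-t) - aaF s₁ s₂ r₁ i'))
      = ∏ i : Fin (N+1),
        (poch s₁ (k i).toNat * Real.Gamma (s₁ + s₂ + r₁ + 2 * ((i:ℕ):ℝ) - 1) *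
          Real.Gamma (s₁ + s₂ + r₁ + 2 * ((i:ℕ):ℝ)) * ((r₁ + (i:ℕ)).factorial : ℝ) *
          Real.Gamma (s₁ + s₂ + ((((k i).toNat : ℕ)):ℝ) - 1)) /
        (poch s₁ (i:ℕ) * Real.Gamma (s₁ + s₂ + r₁ + ((i:ℕ):ℝ) - 1) *
          Real.Gamma (s₁ + s₂ + 2 * ((((k i).toNat : ℕ)):ℝ) - 1) *
          Real.Gamma (((((k i).toNat : ℕ)):ℝ) + 1) *
          Real.Gamma ((r₁ : ℝ) + ((N+1:ℕ):ℝ) - ((((k i).toNat : ℕ)):ℝ)) *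
          Real.Gamma (s₁ + s₂ + r₁ + ((N+1:ℕ):ℝ) + ((((k i).toNat : ℕ)):ℝ) - 1)) := by
    rw [hF, ← Finset.prod_mul_distrib, ← Finset.prod_mul_distrib]
    apply Finset.prod_congr rfl
    intro q _
    have hinner : ∏ p ∈ range (q:ℕ), (bbF s₁ s₂ p - aaF s₁ s₂ r₁ (q:ℕ))
        = ∏ p ∈ range (q:ℕ),
            (((r₁:ℝ)+(q:ℕ))*(s₁+s₂-1+((r₁:ℝ)+(q:ℕ))) - (p:ℝ)*(s₁+s₂-1+(p:ℝ))) := by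
      apply Finset.prod_congr rfl
      intro p _
      simp only [aaF, bbF]; ring
    rw [hinner, ← mul_assoc]
    simpa only [colF] using
      final_col s₁ s₂ hs₁ hs r₁ N (q:ℕ) ((k q).toNat) (by omega) (hκle q)
  calc (∏ i : Fin (N+1), rowF s₁ s₂ r₁ N (i:ℕ))
      * ((∏ j : Fin (N+1), colF s₁ s₂ r₁ N ((k j).toNat))
        * ((∏ t ∈ range N, ∏ i' ∈ Ico (t+1) (N+1),
              (bbF s₁ s₂ (i'-1-t) - aaF s₁ s₂ r₁ i'))
          * ∏ i : Fin (N+1), ∏ j ∈ Ioi i, (xv i - xv j)))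
      = ((∏ i : Fin (N+1), (-1:ℝ)^(N-(i:ℕ)))
          * ∏ i : Fin (N+1), ∏ j ∈ Ioi i, (xv i - xv j))
        * ((∏ i : Fin (N+1),
            (Real.Gamma (s₁+s₂+r₁+2*((i:ℕ):ℝ)) / Real.Gamma (s₁+((i:ℕ):ℝ))))
          * ((∏ j : Fin (N+1), colF s₁ s₂ r₁ N ((k j).toNat))
            * ∏ t ∈ range N, ∏ i' ∈ Ico (t+1) (N+1),
                (bbF s₁ s₂ (i'-1-t) - aaF s₁ s₂ r₁ i'))) := by
        rw [hrowf]; ring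
    _ = _ := by rw [hmain, hpair]
end
end

section
/- Let α, β, γ > -1 and let n ≥ 2 be an integer. Let P be a real polynomial in x, y of total degree n such that ⟨P, q⟩_{α,β,γ} = 0 for every real polynomial q of total degree ≤ n - 1. Then: ⟨∂₁ P, q⟩_{α+1,β,γ+1} = 0 for every real polynomial q of total degree ≤ n - 2; ⟨∂₂ P, q⟩_{α,β+1,γ+1} = 0 for every real polynomial q of total degree ≤ n - 2; and ⟨∂₃ P, q⟩_{α+1,β+1,γ} = 0 for every real polynomial q of total degree ≤ n - 2. -/
open MeasureTheory Real Function

noncomputable section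

/-- The closed triangle. -/
def Tri : Set (ℝ × ℝ) := {p | 0 ≤ p.1 ∧ 0 ≤ p.2 ∧ p.1 + p.2 ≤ 1}

/-- The interior of the triangle. -/
def TriInt : Set (ℝ × ℝ) := {p | 0 < p.1 ∧ 0 < p.2 ∧ p.1 + p.2 < 1}

/-- The Jacobi weight on the triangle. -/
def wt (α β γ : ℝ) (x y : ℝ) : ℝ := x ^ α * y ^ β * (1 - x - y) ^ γ

/-- The normalizing constant. -/
def normConst (α β γ : ℝ) : ℝ :=
  Real.Gamma (α + β + γ + 3) / (Real.Gamma (α + 1) * Real.Gamma (β + 1) * Real.Gamma (γ + 1))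

/-- The weighted `L²` norm on the triangle. -/
def wNorm (α β γ : ℝ) (f : ℝ → ℝ → ℝ) : ℝ :=
  Real.sqrt (normConst α β γ * ∫ p in Tri, (f p.1 p.2) ^ 2 * wt α β γ p.1 p.2)

/-- Membership in `L²(ϖ_{α,β,γ})`. -/
def MemL2 (α β γ : ℝ) (f : ℝ → ℝ → ℝ) : Prop :=
  IntegrableOn (fun p : ℝ × ℝ => (f p.1 p.2) ^ 2 * wt α β γ p.1 p.2) Tri volume

/-- Partial derivative in the first variable. -/
def D1 (f : ℝ → ℝ → ℝ) : ℝ → ℝ → ℝ := fun x y => deriv (fun t => f t y) x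

/-- Partial derivative in the second variable. -/
def D2 (f : ℝ → ℝ → ℝ) : ℝ → ℝ → ℝ := fun x y => deriv (fun t => f x t) y

/-- `∂₃ = ∂₂ - ∂₁`. -/
def D3 (f : ℝ → ℝ → ℝ) : ℝ → ℝ → ℝ := fun x y => D2 f x y - D1 f x y

/-- The three directional derivative operators. -/
def pD : Fin 3 → (ℝ → ℝ → ℝ) → (ℝ → ℝ → ℝ)
  | 0 => D1
  | 1 => D2
  | 2 => D3

/-- The weights `φ_i`. -/
def phi : Fin 3 → ℝ → ℝ → ℝ
  | 0 => fun x y => Real.sqrt (x * (1 - x - y))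
  | 1 => fun x y => Real.sqrt (y * (1 - x - y))
  | 2 => fun x y => Real.sqrt (x * y)

/-- The Sobolev space `W²_r(ϖ_{α,β,γ})`. -/
def MemW2 (r : ℕ) (α β γ : ℝ) (f : ℝ → ℝ → ℝ) : Prop :=
  MemL2 α β γ f ∧ ContDiffOn ℝ r (uncurry f) TriInt ∧
    ∀ i : Fin 3, MemL2 α β γ (fun x y => phi i x y ^ r * (pD i)^[r] f x y)

/-- Evaluation of a bivariate polynomial. -/
def pEval (p : MvPolynomial (Fin 2) ℝ) (x y : ℝ) : ℝ := MvPolynomial.eval ![x, y] p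

/-- The error of best weighted `L²` approximation by polynomials of total degree at most `n`. -/
def bestE (α β γ : ℝ) (n : ℕ) (f : ℝ → ℝ → ℝ) : ℝ :=
  sInf {e | ∃ p : MvPolynomial (Fin 2) ℝ, p.totalDegree ≤ n ∧
    e = wNorm α β γ (fun x y => f x y - pEval p x y)}

/-- The weighted inner product on the triangle. -/
def wInner (α β γ : ℝ) (f g : ℝ → ℝ → ℝ) : ℝ :=
  normConst α β γ * ∫ p in Tri, f p.1 p.2 * g p.1 p.2 * wt α β γ p.1 p.2


section Aux
open MeasureTheory Real intervalIntegral

noncomputable def Bi (u v : ℝ) : ℝ := ∫ t in (0:ℝ)..1, t ^ (u-1) * (1-t) ^ (v-1)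

lemma beta_conv {u v : ℝ} (hu : 0 < u) (hv : 0 < v) :
    IntervalIntegrable (fun t : ℝ => t ^ (u-1) * (1-t) ^ (v-1)) volume 0 1 := by
  have h1 : IntervalIntegrable (fun t : ℝ => t ^ (u-1) * (1-t) ^ (v-1)) volume 0 (1/2) := by
    apply (intervalIntegrable_rpow' (by linarith)).mul_continuousOn
    apply ContinuousOn.rpow_const (by fun_prop)
    intro x hx
    rw [Set.uIcc_of_le (by norm_num)] at hx
    left; intro h; have := hx.2; nlinarith [hx.1, hx.2]
  have h2 : IntervalIntegrable (fun t : ℝ => t ^ (u-1) * (1-t) ^ (v-1)) volume (1/2) 1 := by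
    have hb : IntervalIntegrable (fun x : ℝ => x ^ (v-1)) volume 0 (1/2) :=
      intervalIntegrable_rpow' (by linarith)
    have := (hb.comp_sub_left 1)
    norm_num at this
    apply this.symm.continuousOn_mul
    apply ContinuousOn.rpow_const (by fun_prop)
    intro x hx
    rw [Set.uIcc_of_le (by norm_num)] at hx
    left; intro h; rw [h] at hx; norm_num at hx
  exact h1.trans h2

lemma beta_val {u v : ℝ} (hu : 0 < u) (hv : 0 < v) :
    Bi u v = Real.Gamma u * Real.Gamma v / Real.Gamma (u+v) := by
  have key : ((Bi u v : ℝ) : ℂ) = Complex.betaIntegral u v := by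
    rw [Bi, Complex.betaIntegral, ← intervalIntegral.integral_ofReal]
    apply intervalIntegral.integral_congr
    intro t ht
    rw [Set.uIcc_of_le (by norm_num)] at ht
    push_cast
    rw [Complex.ofReal_cpow ht.1, Complex.ofReal_cpow (by linarith [ht.2])]
    push_cast
    ring
  have h2 := Complex.Gamma_mul_Gamma_eq_betaIntegral
    (s := (u:ℂ)) (t := (v:ℂ)) (by simpa using hu) (by simpa using hv)
  rw [← key, ← Complex.ofReal_add, Complex.Gamma_ofReal, Complex.Gamma_ofReal,
    Complex.Gamma_ofReal, ← Complex.ofReal_mul, ← Complex.ofReal_mul] at h2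
  have h3 := Complex.ofReal_injective h2
  have hne : Real.Gamma (u+v) ≠ 0 := (Real.Gamma_pos_of_pos (by linarith)).ne'
  field_simp
  linarith [h3]

lemma slice_conv {b c : ℝ} (hb : -1 < b) (hc : -1 < c) {T : ℝ} (hT : 0 < T) :
    IntegrableOn (fun y : ℝ => y ^ b * (T - y) ^ c) (Set.Ioc 0 T) := by
  have hg := beta_conv (u := b+1) (v := c+1) (by linarith) (by linarith)
  simp only [add_sub_cancel_right] at hg
  have h1 := hg.comp_mul_left (c := T⁻¹) enorm_ne_top enorm_ne_top
  have h2 := (h1.const_mul (T ^ b * T ^ c))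
  rw [zero_div, one_div, inv_inv] at h2
  rw [intervalIntegrable_iff_integrableOn_Ioc_of_le hT.le] at h2
  apply h2.congr_fun ?_ measurableSet_Ioc
  intro y hy
  have hy0 : 0 ≤ y := hy.1.le
  have hyT : y ≤ T := hy.2
  have hTb : T ^ b ≠ 0 := (Real.rpow_pos_of_pos hT b).ne'
  have hTc : T ^ c ≠ 0 := (Real.rpow_pos_of_pos hT c).ne'
  have e1 : T⁻¹ * y = T⁻¹ * y := rfl
  have e2 : (T⁻¹ * y) ^ b = (T ^ b)⁻¹ * y ^ b := by
    rw [Real.mul_rpow (by positivity) hy0, Real.inv_rpow hT.le]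
  have e3 : (1 - T⁻¹ * y) ^ c = (T ^ c)⁻¹ * (T - y) ^ c := by
    have : 1 - T⁻¹ * y = T⁻¹ * (T - y) := by field_simp
    rw [this, Real.mul_rpow (by positivity) (by linarith), Real.inv_rpow hT.le]
  simp only [e2, e3]
  field_simp

lemma slice_val {b c : ℝ} {T : ℝ} (hT : 0 < T) :
    ∫ y in Set.Ioc (0:ℝ) T, y ^ b * (T - y) ^ c = T ^ (b+c+1) * Bi (b+1) (c+1) := by
  have hsub := intervalIntegral.integral_comp_mul_left
    (fun y : ℝ => y ^ b * (T - y) ^ c) (a := 0) (b := 1) hT.ne'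
  rw [mul_zero, mul_one] at hsub
  have hL : (∫ t in (0:ℝ)..1, (T * t) ^ b * (T - T * t) ^ c)
      = T ^ b * T ^ c * Bi (b+1) (c+1) := by
    rw [Bi, add_sub_cancel_right, add_sub_cancel_right]
    rw [← intervalIntegral.integral_const_mul]
    apply intervalIntegral.integral_congr
    intro t ht
    rw [Set.uIcc_of_le (by norm_num)] at ht
    have e2 : (T * t) ^ b = T ^ b * t ^ b := Real.mul_rpow hT.le ht.1
    have e3 : (T - T * t) ^ c = T ^ c * (1 - t) ^ c := by
      rw [show T - T * t = T * (1 - t) by ring, Real.mul_rpow hT.le (by linarith [ht.2])]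
    simp only [e2, e3]
    ring
  rw [hL] at hsub
  rw [← intervalIntegral.integral_of_le hT.le]
  have hv : (∫ x in (0:ℝ)..T, x ^ b * (T - x) ^ c) = T * (T ^ b * T ^ c * Bi (b+1) (c+1)) := by
    rw [hsub, smul_eq_mul, ← mul_assoc, mul_inv_cancel₀ hT.ne', one_mul]
  rw [hv, Real.rpow_add hT, Real.rpow_add hT, Real.rpow_one]
  ring

noncomputable def Tg (a b c : ℝ) : ℝ :=
  Real.Gamma (a+1) * Real.Gamma (b+1) * Real.Gamma (c+1) / Real.Gamma (a+b+c+3)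

lemma Tri_closed : IsClosed Tri := by
  have h : Tri = {p : ℝ×ℝ | 0 ≤ p.1} ∩ ({p | 0 ≤ p.2} ∩ {p | p.1 + p.2 ≤ 1}) := rfl
  rw [h]
  exact (isClosed_le continuous_const continuous_fst).inter
    ((isClosed_le continuous_const continuous_snd).inter
      (isClosed_le (continuous_fst.add continuous_snd) continuous_const))

lemma Tri_meas : MeasurableSet Tri := Tri_closed.measurableSet

lemma wt_nonneg {a b c x y : ℝ} (h : (x, y) ∈ Tri) : 0 ≤ wt a b c x y := by
  obtain ⟨h1, h2, h3⟩ := h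
  have : (0:ℝ) ≤ 1 - x - y := by simp at h1 h2 h3 ⊢; linarith
  exact mul_nonneg (mul_nonneg (Real.rpow_nonneg h1 a) (Real.rpow_nonneg h2 b))
    (Real.rpow_nonneg this c)

lemma wt_key {a b c : ℝ} (ha : -1 < a) (hb : -1 < b) (hc : -1 < c) :
    IntegrableOn (fun z : ℝ × ℝ => wt a b c z.1 z.2) Tri volume ∧
      ∫ z in Tri, wt a b c z.1 z.2 = Tg a b c := by
  set W : ℝ × ℝ → ℝ := fun z => wt a b c z.1 z.2 with hWdef
  set G : ℝ × ℝ → ℝ := Tri.indicator W with hGdef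
  have hWm : Measurable W := by rw [hWdef]; unfold wt; fun_prop
  have hGm : Measurable G := hWm.indicator Tri_meas
  have hGnn : ∀ z, 0 ≤ G z := by
    intro z
    rw [hGdef]
    by_cases h : z ∈ Tri
    · rw [Set.indicator_of_mem h]; exact wt_nonneg (x := z.1) (y := z.2) h
    · rw [Set.indicator_of_notMem h]
  have hslice : ∀ x : ℝ, 0 ≤ x → x < 1 →
      (fun y => G (x, y)) =
        (Set.Icc (0:ℝ) (1-x)).indicator (fun y => x ^ a * (y ^ b * (1 - x - y) ^ c)) := by
    intro x hx0 hx1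
    funext y
    have hmem : ((x, y) ∈ Tri) ↔ (y ∈ Set.Icc (0:ℝ) (1-x)) := by
      simp only [Tri, Set.mem_setOf_eq, Set.mem_Icc]
      constructor
      · rintro ⟨_, h2, h3⟩; exact ⟨h2, by linarith⟩
      · rintro ⟨h2, h3⟩; exact ⟨hx0, h2, by linarith⟩
    by_cases h1 : (x, y) ∈ Tri
    · rw [hGdef, Set.indicator_of_mem h1, Set.indicator_of_mem (hmem.mp h1)]
      show wt a b c x y = _
      rw [wt, mul_assoc]
    · rw [hGdef, Set.indicator_of_notMem h1,
        Set.indicator_of_notMem (fun hy => h1 (hmem.mpr hy))]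
  have hzero : ∀ x : ℝ, (¬ (0 ≤ x ∧ x ≤ 1)) → (fun y => G (x, y)) = 0 := by
    intro x hx; funext y
    show G (x, y) = 0
    rw [hGdef, Set.indicator_of_notMem]
    intro hmem
    obtain ⟨m1, m2, m3⟩ := hmem
    simp only at m1 m2 m3
    exact hx ⟨m1, by linarith⟩
  have hae : ∀ᵐ x : ℝ, x ∉ ({0, 1} : Set ℝ) :=
    measure_eq_zero_iff_ae_notMem.mp (((Set.finite_singleton 1).insert 0).measure_zero volume)
  have hint_slice : ∀ x : ℝ, x ≠ 1 → Integrable (fun y => G (x, y)) volume := by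
    intro x hx
    by_cases h : 0 ≤ x ∧ x ≤ 1
    · have hx1 : x < 1 := lt_of_le_of_ne h.2 hx
      rw [hslice x h.1 hx1]
      rw [integrable_indicator_iff measurableSet_Icc]
      have hIoc : IntegrableOn (fun y : ℝ => y ^ b * (1 - x - y) ^ c)
          (Set.Icc 0 (1-x)) volume := by
        rw [integrableOn_Icc_iff_integrableOn_Ioc]
        exact slice_conv hb hc (by linarith)
      exact hIoc.const_mul _
    · rw [hzero x h]; exact integrable_zero _ _ _
  have hval : ∀ x : ℝ, 0 ≤ x → x < 1 →
      ∫ y, G (x, y) = x ^ a * ((1-x) ^ (b+c+1) * Bi (b+1) (c+1)) := by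
    intro x hx0 hx1
    rw [hslice x hx0 hx1, MeasureTheory.integral_indicator measurableSet_Icc,
      MeasureTheory.integral_Icc_eq_integral_Ioc, MeasureTheory.integral_const_mul,
      slice_val (by linarith : (0:ℝ) < 1 - x)]
  have houter : (fun x => ∫ y, G (x, y)) =ᵐ[(volume : Measure ℝ)]
      (Set.Ioo (0:ℝ) 1).indicator
        (fun x => x ^ a * ((1-x) ^ (b+c+1) * Bi (b+1) (c+1))) := by
    filter_upwards [hae] with x hx
    simp only [Set.mem_insert_iff, Set.mem_singleton_iff] at hx
    push_neg at hx
    by_cases h0 : 0 ≤ x ∧ x < 1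
    · rcases eq_or_lt_of_le h0.1 with h | h
      · exact absurd h.symm hx.1
      · rw [hval x h0.1 h0.2, Set.indicator_of_mem (Set.mem_Ioo.mpr ⟨h, h0.2⟩)]
    · have hno : ¬ (0 ≤ x ∧ x ≤ 1) := by
        intro hcon; exact h0 ⟨hcon.1, lt_of_le_of_ne hcon.2 hx.2⟩
      rw [hzero x hno, Set.indicator_of_notMem]
      · simp
      · intro hmem
        rw [Set.mem_Ioo] at hmem
        exact hno ⟨hmem.1.le, hmem.2.le⟩
  have hKint : Integrable ((Set.Ioo (0:ℝ) 1).indicator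
      (fun x => x ^ a * ((1-x) ^ (b+c+1) * Bi (b+1) (c+1)))) volume := by
    rw [integrable_indicator_iff measurableSet_Ioo]
    have h1 : IntegrableOn (fun x : ℝ => x ^ a * (1-x) ^ (b+c+1)) (Set.Ioo 0 1) volume :=
      (slice_conv ha (by linarith) one_pos).mono_set Set.Ioo_subset_Ioc_self
    have h1' := h1.mul_const (Bi (b+1) (c+1))
    simp only [mul_assoc] at h1'
    exact h1'
  have hGsm : AEStronglyMeasurable G ((volume : Measure ℝ).prod volume) := by
    rw [← MeasureTheory.Measure.volume_eq_prod]
    exact hGm.aestronglyMeasurable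
  have hprod : Integrable G ((volume : Measure ℝ).prod volume) := by
    rw [MeasureTheory.integrable_prod_iff hGsm]
    constructor
    · filter_upwards [hae] with x hx
      simp only [Set.mem_insert_iff, Set.mem_singleton_iff] at hx
      push_neg at hx
      exact hint_slice x hx.2
    · have hnrm : ∀ x y : ℝ, ‖G (x, y)‖ = G (x, y) := fun x y => Real.norm_of_nonneg (hGnn _)
      simp only [hnrm]
      exact hKint.congr houter.symm
  have hGint : Integrable G (volume : Measure (ℝ×ℝ)) := by
    rw [MeasureTheory.Measure.volume_eq_prod]; exact hprod
  have hIntOn : IntegrableOn W Tri volume := (integrable_indicator_iff Tri_meas).mp hGint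
  refine ⟨hIntOn, ?_⟩
  have h1 : ∫ z in Tri, W z = ∫ z, G z := (MeasureTheory.integral_indicator Tri_meas).symm
  have h2 : ∫ z, G z = ∫ x, ∫ y, G (x, y) := by
    rw [MeasureTheory.Measure.volume_eq_prod]
    exact MeasureTheory.integral_prod G hprod
  rw [h1, h2, integral_congr_ae houter, MeasureTheory.integral_indicator measurableSet_Ioo,
    MeasureTheory.restrict_Ioo_eq_restrict_Ioc]
  have h3 : ∫ x in Set.Ioc (0:ℝ) 1, x ^ a * ((1-x) ^ (b+c+1) * Bi (b+1) (c+1))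
      = (∫ x in Set.Ioc (0:ℝ) 1, x ^ a * (1-x) ^ (b+c+1)) * Bi (b+1) (c+1) := by
    rw [← MeasureTheory.integral_mul_const]
    congr 1; funext x; ring
  rw [h3]
  have h4 := slice_val (b := a) (c := b+c+1) (T := 1) one_pos
  rw [h4, Real.one_rpow, one_mul]
  rw [beta_val (by linarith) (by linarith), beta_val (by linarith) (by linarith)]
  rw [Tg]
  have e1 : a + 1 + (b + c + 1 + 1) = a+b+c+3 := by ring
  have e2 : b + 1 + (c + 1) = b + c + 2 := by ring
  rw [e1, e2]
  have hne1 : Real.Gamma (b+c+2) ≠ 0 := (Real.Gamma_pos_of_pos (by linarith)).ne'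
  have hne2 : Real.Gamma (a+b+c+3) ≠ 0 := (Real.Gamma_pos_of_pos (by linarith)).ne'
  have e3 : b + c + 1 + 1 = b + c + 2 := by ring
  rw [e3]
  field_simp
lemma rpow_fold {x : ℝ} (hx : 0 ≤ x) {a : ℝ} (ha : -1 < a) : x * x ^ a = x ^ (a+1) := by
  rcases eq_or_lt_of_le hx with h | h
  · rw [← h, Real.zero_rpow (by linarith : a + 1 ≠ 0), zero_mul]
  · rw [Real.rpow_add h, Real.rpow_one]; ring

lemma rpow_nat_fold_aux (i : ℕ) : ∀ (x : ℝ), 0 ≤ x → ∀ (a : ℝ), -1 < a →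
    x ^ i * x ^ a = x ^ (a + i) := by
  induction i with
  | zero => intro x hx a ha; simp
  | succ n ih =>
    intro x hx a ha
    have h1 : x ^ (n+1) * x ^ a = x ^ n * (x * x ^ a) := by ring
    rw [h1, rpow_fold hx ha, ih x hx (a+1) (by linarith)]
    push_cast
    ring_nf

lemma rpow_nat_fold {x : ℝ} (hx : 0 ≤ x) {a : ℝ} (ha : -1 < a) (i : ℕ) :
    x ^ i * x ^ a = x ^ (a + i) :=
  rpow_nat_fold_aux i x hx a ha

lemma Tri_compact : IsCompact Tri := by
  apply IsCompact.of_isClosed_subset (isCompact_Icc (a := ((0:ℝ),(0:ℝ))) (b := (1,1))) Tri_closed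
  rintro ⟨x, y⟩ ⟨h1, h2, h3⟩
  simp only at h1 h2 h3
  simp only [Set.mem_Icc, Prod.le_def]
  refine ⟨⟨h1, h2⟩, ⟨by linarith, by linarith⟩⟩

lemma pEval_continuous (p : MvPolynomial (Fin 2) ℝ) :
    Continuous (fun z : ℝ × ℝ => pEval p z.1 z.2) := by
  have h : (fun z : ℝ × ℝ => pEval p z.1 z.2)
      = (fun v : Fin 2 → ℝ => MvPolynomial.eval v p) ∘ (fun z : ℝ × ℝ => ![z.1, z.2]) := rfl
  rw [h]
  apply (MvPolynomial.continuous_eval p).comp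
  apply continuous_pi
  intro i
  fin_cases i
  · exact continuous_fst
  · exact continuous_snd

lemma poly_wt_int {a b c : ℝ} (ha : -1 < a) (hb : -1 < b) (hc : -1 < c)
    (h : MvPolynomial (Fin 2) ℝ) :
    IntegrableOn (fun z : ℝ × ℝ => pEval h z.1 z.2 * wt a b c z.1 z.2) Tri volume := by
  obtain ⟨C, hC⟩ := Tri_compact.exists_bound_of_continuousOn (pEval_continuous h).continuousOn
  apply MeasureTheory.Integrable.bdd_mul (c := C) (wt_key ha hb hc).1
    ((pEval_continuous h).measurable.aestronglyMeasurable)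
  exact (MeasureTheory.ae_restrict_iff' Tri_meas).2 (Filter.Eventually.of_forall fun z hz => hC z hz)

lemma pEval_add (u v : MvPolynomial (Fin 2) ℝ) (x y : ℝ) :
    pEval (u + v) x y = pEval u x y + pEval v x y := by simp [pEval]

lemma pEval_mul (u v : MvPolynomial (Fin 2) ℝ) (x y : ℝ) :
    pEval (u * v) x y = pEval u x y * pEval v x y := by simp [pEval]

lemma pEval_monomial (s : Fin 2 →₀ ℕ) (c₀ : ℝ) (x y : ℝ) :
    pEval (MvPolynomial.monomial s c₀) x y = c₀ * x ^ (s 0) * y ^ (s 1) := by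
  rw [pEval, MvPolynomial.eval_monomial]
  rw [Finsupp.prod_fintype _ _ (fun i => pow_zero _)]
  rw [Fin.prod_univ_two]
  simp [mul_assoc]

noncomputable def JJ (a b c : ℝ) (u v : MvPolynomial (Fin 2) ℝ) : ℝ :=
  ∫ z in Tri, pEval u z.1 z.2 * pEval v z.1 z.2 * wt a b c z.1 z.2

lemma JJ_int {a b c : ℝ} (ha : -1 < a) (hb : -1 < b) (hc : -1 < c)
    (u v : MvPolynomial (Fin 2) ℝ) :
    IntegrableOn (fun z : ℝ × ℝ => pEval u z.1 z.2 * pEval v z.1 z.2 * wt a b c z.1 z.2)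
      Tri volume := by
  have h := poly_wt_int ha hb hc (u * v)
  apply h.congr_fun ?_ Tri_meas
  intro z _
  simp only [pEval_mul]

lemma mono_wt_int {a b c : ℝ} (ha : -1 < a) (hb : -1 < b) (hc : -1 < c) (i j : ℕ) :
    ∫ z in Tri, z.1 ^ i * z.2 ^ j * wt a b c z.1 z.2 = Tg (a+i) (b+j) c := by
  have key := wt_key (a := a+i) (b := b+j) (c := c) (by linarith [Nat.cast_nonneg (α := ℝ) i])
    (by linarith [Nat.cast_nonneg (α := ℝ) j]) hc
  rw [← key.2]
  apply MeasureTheory.setIntegral_congr_fun Tri_meas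
  intro z hz
  obtain ⟨h1, h2, _⟩ := hz
  simp only at h1 h2 ⊢
  rw [wt, wt, ← rpow_nat_fold h1 ha i, ← rpow_nat_fold h2 hb j]
  ring

lemma JJ_mono {a b c : ℝ} (ha : -1 < a) (hb : -1 < b) (hc : -1 < c)
    (s t : Fin 2 →₀ ℕ) (c₀ d₀ : ℝ) :
    JJ a b c (MvPolynomial.monomial s c₀) (MvPolynomial.monomial t d₀)
      = c₀ * d₀ * Tg (a + (s 0 + t 0 : ℕ)) (b + (s 1 + t 1 : ℕ)) c := by
  rw [JJ]
  have hcong : ∀ z : ℝ × ℝ, z ∈ Tri →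
      pEval (MvPolynomial.monomial s c₀) z.1 z.2 * pEval (MvPolynomial.monomial t d₀) z.1 z.2
        * wt a b c z.1 z.2
      = c₀ * d₀ * (z.1 ^ (s 0 + t 0) * z.2 ^ (s 1 + t 1) * wt a b c z.1 z.2) := by
    intro z _
    rw [pEval_monomial, pEval_monomial, pow_add, pow_add]
    ring
  rw [MeasureTheory.setIntegral_congr_fun Tri_meas hcong, MeasureTheory.integral_const_mul,
    mono_wt_int ha hb hc]


lemma pEval_zero (x y : ℝ) : pEval 0 x y = 0 := by simp [pEval]

lemma JJ_zero_left (a b c : ℝ) (v : MvPolynomial (Fin 2) ℝ) : JJ a b c 0 v = 0 := by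
  rw [JJ]
  have : ∀ z : ℝ × ℝ, pEval 0 z.1 z.2 * pEval v z.1 z.2 * wt a b c z.1 z.2 = 0 := by
    intro z; rw [pEval_zero]; ring
  simp only [this, MeasureTheory.integral_zero]

lemma JJ_zero_right (a b c : ℝ) (v : MvPolynomial (Fin 2) ℝ) : JJ a b c v 0 = 0 := by
  rw [JJ]
  have : ∀ z : ℝ × ℝ, pEval v z.1 z.2 * pEval 0 z.1 z.2 * wt a b c z.1 z.2 = 0 := by
    intro z; rw [pEval_zero]; ring
  simp only [this, MeasureTheory.integral_zero]

lemma JJ_add_left {a b c : ℝ} (ha : -1 < a) (hb : -1 < b) (hc : -1 < c)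
    (u u' v : MvPolynomial (Fin 2) ℝ) :
    JJ a b c (u + u') v = JJ a b c u v + JJ a b c u' v := by
  have h := MeasureTheory.integral_add (μ := volume.restrict Tri)
    (JJ_int ha hb hc u v) (JJ_int ha hb hc u' v)
  rw [JJ, JJ, JJ, ← h]
  congr 1
  funext z
  simp only [Pi.add_apply, pEval_add]
  ring

lemma JJ_add_right {a b c : ℝ} (ha : -1 < a) (hb : -1 < b) (hc : -1 < c)
    (u v v' : MvPolynomial (Fin 2) ℝ) :
    JJ a b c u (v + v') = JJ a b c u v + JJ a b c u v' := by
  have h := MeasureTheory.integral_add (μ := volume.restrict Tri)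
    (JJ_int ha hb hc u v) (JJ_int ha hb hc u v')
  rw [JJ, JJ, JJ, ← h]
  congr 1
  funext z
  simp only [Pi.add_apply, pEval_add]
  ring

lemma JJ_sum_left {a b c : ℝ} (ha : -1 < a) (hb : -1 < b) (hc : -1 < c)
    {ι : Type*} (S : Finset ι) (F : ι → MvPolynomial (Fin 2) ℝ)
    (v : MvPolynomial (Fin 2) ℝ) :
    JJ a b c (∑ i ∈ S, F i) v = ∑ i ∈ S, JJ a b c (F i) v := by
  classical
  induction S using Finset.induction_on with
  | empty => simp [JJ_zero_left]
  | insert _ _ hnot ih =>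
    rw [Finset.sum_insert hnot, Finset.sum_insert hnot, JJ_add_left ha hb hc, ih]

lemma JJ_sum_right {a b c : ℝ} (ha : -1 < a) (hb : -1 < b) (hc : -1 < c)
    {ι : Type*} (S : Finset ι) (F : ι → MvPolynomial (Fin 2) ℝ)
    (v : MvPolynomial (Fin 2) ℝ) :
    JJ a b c v (∑ i ∈ S, F i) = ∑ i ∈ S, JJ a b c v (F i) := by
  classical
  induction S using Finset.induction_on with
  | empty => simp [JJ_zero_right]
  | insert _ _ hnot ih =>
    rw [Finset.sum_insert hnot, Finset.sum_insert hnot, JJ_add_right ha hb hc, ih]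

lemma Tg_rec1 {a c : ℝ} (b : ℝ) (ha : a + 1 ≠ 0) (hc : c + 1 ≠ 0) :
    (a+1) * Tg a b (c+1) = (c+1) * Tg (a+1) b c := by
  rw [Tg, Tg]
  rw [show a + b + (c+1) + 3 = a + 1 + b + c + 3 from by ring]
  rw [show Real.Gamma (c+1+1) = (c+1) * Real.Gamma (c+1) from Real.Gamma_add_one hc]
  rw [show Real.Gamma (a+1+1) = (a+1) * Real.Gamma (a+1) from Real.Gamma_add_one ha]
  ring

lemma Tg_rec2 {b c : ℝ} (a : ℝ) (hb : b + 1 ≠ 0) (hc : c + 1 ≠ 0) :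
    (b+1) * Tg a b (c+1) = (c+1) * Tg a (b+1) c := by
  rw [Tg, Tg]
  rw [show a + b + (c+1) + 3 = a + (b+1) + c + 3 from by ring]
  rw [show Real.Gamma (c+1+1) = (c+1) * Real.Gamma (c+1) from Real.Gamma_add_one hc]
  rw [show Real.Gamma (b+1+1) = (b+1) * Real.Gamma (b+1) from Real.Gamma_add_one hb]
  ring

lemma Tg_rec3 {a b : ℝ} (c : ℝ) (ha : a + 1 ≠ 0) (hb : b + 1 ≠ 0) :
    (b+1) * Tg (a+1) b c = (a+1) * Tg a (b+1) c := by
  rw [Tg, Tg]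
  rw [show a + 1 + b + c + 3 = a + (b+1) + c + 3 from by ring]
  rw [show Real.Gamma (a+1+1) = (a+1) * Real.Gamma (a+1) from Real.Gamma_add_one ha]
  rw [show Real.Gamma (b+1+1) = (b+1) * Real.Gamma (b+1) from Real.Gamma_add_one hb]
  ring

lemma cast_shift (x B c' : ℝ) (i k : ℕ) :
    (i : ℝ) * Tg (x + 1 + ((i - 1 + k : ℕ) : ℝ)) B c' = (i : ℝ) * Tg (x + ((i + k : ℕ) : ℝ)) B c' := by
  cases i with
  | zero => simp
  | succ n =>
    congr 2
    push_cast [Nat.succ_sub_one]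
    ring

lemma cast_shift' (x B c' : ℝ) (i k : ℕ) :
    (k : ℝ) * Tg (x + 1 + ((i + (k - 1) : ℕ) : ℝ)) B c' = (k : ℝ) * Tg (x + ((i + k : ℕ) : ℝ)) B c' := by
  cases k with
  | zero => simp
  | succ n =>
    congr 2
    push_cast [Nat.succ_sub_one]
    ring

lemma pair_core {α γ : ℝ} (B : ℝ) (hα : -1 < α) (hγ : -1 < γ) (i k : ℕ) :
    (i:ℝ) * Tg (α+1+((i-1+k : ℕ):ℝ)) B (γ+1) + (k:ℝ) * Tg (α+1+((i+(k-1) : ℕ):ℝ)) B (γ+1)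
    + (α+1) * Tg (α+((i+k:ℕ):ℝ)) B (γ+1) - (γ+1) * Tg (α+1+((i+k:ℕ):ℝ)) B γ = 0 := by
  have hik : (0:ℝ) ≤ ((i+k : ℕ) : ℝ) := Nat.cast_nonneg _
  have hrec := Tg_rec1 (a := α+((i+k:ℕ):ℝ)) (c := γ) B (by linarith) (by linarith)
  linear_combination (norm := (push_cast; ring_nf))
    cast_shift α B (γ+1) i k + cast_shift' α B (γ+1) i k + hrec

lemma cast_shift2 (A x c' : ℝ) (j l : ℕ) :
    (j : ℝ) * Tg A (x + 1 + ((j - 1 + l : ℕ) : ℝ)) c' = (j : ℝ) * Tg A (x + ((j + l : ℕ) : ℝ)) c' := by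
  cases j with
  | zero => simp
  | succ n => congr 2; push_cast [Nat.succ_sub_one]; ring

lemma cast_shift2' (A x c' : ℝ) (j l : ℕ) :
    (l : ℝ) * Tg A (x + 1 + ((j + (l - 1) : ℕ) : ℝ)) c' = (l : ℝ) * Tg A (x + ((j + l : ℕ) : ℝ)) c' := by
  cases l with
  | zero => simp
  | succ n => congr 2; push_cast [Nat.succ_sub_one]; ring

lemma pair_core2 {β γ : ℝ} (A : ℝ) (hβ : -1 < β) (hγ : -1 < γ) (j l : ℕ) :
    (j:ℝ) * Tg A (β+1+((j-1+l : ℕ):ℝ)) (γ+1) + (l:ℝ) * Tg A (β+1+((j+(l-1) : ℕ):ℝ)) (γ+1)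
    + (β+1) * Tg A (β+((j+l:ℕ):ℝ)) (γ+1) - (γ+1) * Tg A (β+1+((j+l:ℕ):ℝ)) γ = 0 := by
  have hjl : (0:ℝ) ≤ ((j+l : ℕ) : ℝ) := Nat.cast_nonneg _
  have hrec := Tg_rec2 (b := β+((j+l:ℕ):ℝ)) (c := γ) A (by linarith) (by linarith)
  linear_combination (norm := (push_cast; ring_nf))
    cast_shift2 A β (γ+1) j l + cast_shift2' A β (γ+1) j l + hrec

lemma pair_core3 {α β : ℝ} (γ : ℝ) (hα : -1 < α) (hβ : -1 < β) (i j k l : ℕ) :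
    ((j:ℝ) * Tg (α+1+((i+k:ℕ):ℝ)) (β+1+((j-1+l : ℕ):ℝ)) γ
      - (i:ℝ) * Tg (α+1+((i-1+k : ℕ):ℝ)) (β+1+((j+l:ℕ):ℝ)) γ)
    + ((l:ℝ) * Tg (α+1+((i+k:ℕ):ℝ)) (β+1+((j+(l-1) : ℕ):ℝ)) γ
      - (k:ℝ) * Tg (α+1+((i+(k-1) : ℕ):ℝ)) (β+1+((j+l:ℕ):ℝ)) γ)
    + (β+1) * Tg (α+1+((i+k:ℕ):ℝ)) (β+((j+l:ℕ):ℝ)) γ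
    - (α+1) * Tg (α+((i+k:ℕ):ℝ)) (β+1+((j+l:ℕ):ℝ)) γ = 0 := by
  have hik : (0:ℝ) ≤ ((i+k : ℕ) : ℝ) := Nat.cast_nonneg _
  have hjl : (0:ℝ) ≤ ((j+l : ℕ) : ℝ) := Nat.cast_nonneg _
  have hrec := Tg_rec3 (a := α+((i+k:ℕ):ℝ)) (b := β+((j+l:ℕ):ℝ)) γ
    (by linarith) (by linarith)
  linear_combination (norm := (push_cast; ring_nf))
    cast_shift2 (α+1+((i+k:ℕ):ℝ)) β γ j l - cast_shift α (β+1+((j+l:ℕ):ℝ)) γ i k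
    + cast_shift2' (α+1+((i+k:ℕ):ℝ)) β γ j l - cast_shift' α (β+1+((j+l:ℕ):ℝ)) γ i k + hrec

lemma ne01 : (0 : Fin 2) ≠ 1 := by decide
lemma ne10 : (1 : Fin 2) ≠ 0 := by decide

open MvPolynomial in
lemma pair1 {α β γ : ℝ} (hα : -1 < α) (hβ : -1 < β) (hγ : -1 < γ)
    (s t : Fin 2 →₀ ℕ) (c d : ℝ) :
    JJ (α+1) β (γ+1) (pderiv 0 (monomial s c)) (monomial t d)
      + JJ (α+1) β (γ+1) (monomial s c) (pderiv 0 (monomial t d))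
      + (α+1) * JJ α β (γ+1) (monomial s c) (monomial t d)
      - (γ+1) * JJ (α+1) β γ (monomial s c) (monomial t d) = 0 := by
  have hα1 : -1 < α + 1 := by linarith
  have hγ1 : -1 < γ + 1 := by linarith
  rw [MvPolynomial.pderiv_monomial, MvPolynomial.pderiv_monomial]
  rw [JJ_mono hα1 hβ hγ1, JJ_mono hα1 hβ hγ1, JJ_mono hα hβ hγ1, JJ_mono hα1 hβ hγ]
  simp only [Finsupp.tsub_apply, Finsupp.single_eq_same,
    Finsupp.single_eq_of_ne ne01, Finsupp.single_eq_of_ne ne10, tsub_zero]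
  linear_combination (c * d) * pair_core (β + ((s 1 + t 1 : ℕ) : ℝ)) hα hγ (s 0) (t 0)

open MvPolynomial in
lemma pair2 {α β γ : ℝ} (hα : -1 < α) (hβ : -1 < β) (hγ : -1 < γ)
    (s t : Fin 2 →₀ ℕ) (c d : ℝ) :
    JJ α (β+1) (γ+1) (pderiv 1 (monomial s c)) (monomial t d)
      + JJ α (β+1) (γ+1) (monomial s c) (pderiv 1 (monomial t d))
      + (β+1) * JJ α β (γ+1) (monomial s c) (monomial t d)
      - (γ+1) * JJ α (β+1) γ (monomial s c) (monomial t d) = 0 := by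
  have hβ1 : -1 < β + 1 := by linarith
  have hγ1 : -1 < γ + 1 := by linarith
  rw [MvPolynomial.pderiv_monomial, MvPolynomial.pderiv_monomial]
  rw [JJ_mono hα hβ1 hγ1, JJ_mono hα hβ1 hγ1, JJ_mono hα hβ hγ1, JJ_mono hα hβ1 hγ]
  simp only [Finsupp.tsub_apply, Finsupp.single_eq_same,
    Finsupp.single_eq_of_ne ne01, Finsupp.single_eq_of_ne ne10, tsub_zero]
  linear_combination (c * d) * pair_core2 (α + ((s 0 + t 0 : ℕ) : ℝ)) hβ hγ (s 1) (t 1)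

open MvPolynomial in
lemma pair3 {α β γ : ℝ} (hα : -1 < α) (hβ : -1 < β) (hγ : -1 < γ)
    (s t : Fin 2 →₀ ℕ) (c d : ℝ) :
    JJ (α+1) (β+1) γ (pderiv 1 (monomial s c) - pderiv 0 (monomial s c)) (monomial t d)
      + JJ (α+1) (β+1) γ (monomial s c) (pderiv 1 (monomial t d) - pderiv 0 (monomial t d))
      + (β+1) * JJ (α+1) β γ (monomial s c) (monomial t d)
      - (α+1) * JJ α (β+1) γ (monomial s c) (monomial t d) = 0 := by
  have hα1 : -1 < α + 1 := by linarith
  have hβ1 : -1 < β + 1 := by linarith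
  simp only [MvPolynomial.pderiv_monomial]
  rw [sub_eq_add_neg (monomial (s - Finsupp.single 1 1) (c * (s 1)))]
  rw [sub_eq_add_neg (monomial (t - Finsupp.single 1 1) (d * (t 1)))]
  rw [show -(monomial (s - Finsupp.single 0 1) (c * (s 0)))
      = monomial (s - Finsupp.single 0 1) (-(c * (s 0))) from by rw [← map_neg]]
  rw [show -(monomial (t - Finsupp.single 0 1) (d * (t 0)))
      = monomial (t - Finsupp.single 0 1) (-(d * (t 0))) from by rw [← map_neg]]
  rw [JJ_add_left hα1 hβ1 hγ, JJ_add_right hα1 hβ1 hγ]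
  rw [JJ_mono hα1 hβ1 hγ, JJ_mono hα1 hβ1 hγ, JJ_mono hα1 hβ1 hγ, JJ_mono hα1 hβ1 hγ,
    JJ_mono hα1 hβ hγ, JJ_mono hα hβ1 hγ]
  simp only [Finsupp.tsub_apply, Finsupp.single_eq_same,
    Finsupp.single_eq_of_ne ne01, Finsupp.single_eq_of_ne ne10, tsub_zero]
  linear_combination (c * d) * pair_core3 γ hα hβ (s 0) (s 1) (t 0) (t 1)

open MvPolynomial in
lemma key1 {α β γ : ℝ} (hα : -1 < α) (hβ : -1 < β) (hγ : -1 < γ)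
    (f g : MvPolynomial (Fin 2) ℝ) :
    JJ (α+1) β (γ+1) (pderiv 0 f) g
      + JJ (α+1) β (γ+1) f (pderiv 0 g)
      + (α+1) * JJ α β (γ+1) f g
      - (γ+1) * JJ (α+1) β γ f g = 0 := by
  have hα1 : -1 < α + 1 := by linarith
  have hγ1 : -1 < γ + 1 := by linarith
  conv_lhs => rw [← support_sum_monomial_coeff f, ← support_sum_monomial_coeff g]
  simp only [map_sum]
  rw [JJ_sum_left hα1 hβ hγ1, JJ_sum_left hα1 hβ hγ1, JJ_sum_left hα hβ hγ1,
    JJ_sum_left hα1 hβ hγ]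
  simp only [JJ_sum_right hα1 hβ hγ1, JJ_sum_right hα hβ hγ1, JJ_sum_right hα1 hβ hγ,
    Finset.mul_sum]
  rw [← Finset.sum_add_distrib, ← Finset.sum_add_distrib, ← Finset.sum_sub_distrib]
  apply Finset.sum_eq_zero
  intro m _
  rw [← Finset.sum_add_distrib, ← Finset.sum_add_distrib, ← Finset.sum_sub_distrib]
  apply Finset.sum_eq_zero
  intro t _
  exact pair1 hα hβ hγ m t _ _

open MvPolynomial in
lemma key2 {α β γ : ℝ} (hα : -1 < α) (hβ : -1 < β) (hγ : -1 < γ)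
    (f g : MvPolynomial (Fin 2) ℝ) :
    JJ α (β+1) (γ+1) (pderiv 1 f) g
      + JJ α (β+1) (γ+1) f (pderiv 1 g)
      + (β+1) * JJ α β (γ+1) f g
      - (γ+1) * JJ α (β+1) γ f g = 0 := by
  have hβ1 : -1 < β + 1 := by linarith
  have hγ1 : -1 < γ + 1 := by linarith
  conv_lhs => rw [← support_sum_monomial_coeff f, ← support_sum_monomial_coeff g]
  simp only [map_sum]
  rw [JJ_sum_left hα hβ1 hγ1, JJ_sum_left hα hβ1 hγ1, JJ_sum_left hα hβ hγ1,
    JJ_sum_left hα hβ1 hγ]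
  simp only [JJ_sum_right hα hβ1 hγ1, JJ_sum_right hα hβ hγ1, JJ_sum_right hα hβ1 hγ,
    Finset.mul_sum]
  rw [← Finset.sum_add_distrib, ← Finset.sum_add_distrib, ← Finset.sum_sub_distrib]
  apply Finset.sum_eq_zero
  intro m _
  rw [← Finset.sum_add_distrib, ← Finset.sum_add_distrib, ← Finset.sum_sub_distrib]
  apply Finset.sum_eq_zero
  intro t _
  exact pair2 hα hβ hγ m t _ _

open MvPolynomial in
lemma key3 {α β γ : ℝ} (hα : -1 < α) (hβ : -1 < β) (hγ : -1 < γ)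
    (f g : MvPolynomial (Fin 2) ℝ) :
    JJ (α+1) (β+1) γ (pderiv 1 f - pderiv 0 f) g
      + JJ (α+1) (β+1) γ f (pderiv 1 g - pderiv 0 g)
      + (β+1) * JJ (α+1) β γ f g
      - (α+1) * JJ α (β+1) γ f g = 0 := by
  have hα1 : -1 < α + 1 := by linarith
  have hβ1 : -1 < β + 1 := by linarith
  conv_lhs => rw [← support_sum_monomial_coeff f, ← support_sum_monomial_coeff g]
  simp only [map_sum, ← Finset.sum_sub_distrib]
  rw [JJ_sum_left hα1 hβ1 hγ, JJ_sum_left hα1 hβ1 hγ, JJ_sum_left hα1 hβ hγ,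
    JJ_sum_left hα hβ1 hγ]
  simp only [JJ_sum_right hα1 hβ1 hγ, JJ_sum_right hα1 hβ hγ, JJ_sum_right hα hβ1 hγ,
    Finset.mul_sum]
  rw [← Finset.sum_add_distrib, ← Finset.sum_add_distrib, ← Finset.sum_sub_distrib]
  apply Finset.sum_eq_zero
  intro m _
  rw [← Finset.sum_add_distrib, ← Finset.sum_add_distrib, ← Finset.sum_sub_distrib]
  apply Finset.sum_eq_zero
  intro t _
  have h := pair3 hα hβ hγ m t (MvPolynomial.coeff m f) (MvPolynomial.coeff t g)
  exact h

lemma pEval_X0 (x y : ℝ) : pEval (MvPolynomial.X 0) x y = x := by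
  simp [pEval]

lemma pEval_X1 (x y : ℝ) : pEval (MvPolynomial.X 1) x y = y := by
  simp [pEval]

lemma pEval_one (x y : ℝ) : pEval 1 x y = 1 := by simp [pEval]

lemma pEval_C (r x y : ℝ) : pEval (MvPolynomial.C r) x y = r := by simp [pEval]

lemma pEval_sub (u v : MvPolynomial (Fin 2) ℝ) (x y : ℝ) :
    pEval (u - v) x y = pEval u x y - pEval v x y := by simp [pEval]

lemma JJ_foldX {a b c : ℝ} (ha : -1 < a) (u v : MvPolynomial (Fin 2) ℝ) :
    JJ (a+1) b c u v = JJ a b c u (MvPolynomial.X 0 * v) := by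
  rw [JJ, JJ]
  apply MeasureTheory.setIntegral_congr_fun Tri_meas
  intro z hz
  obtain ⟨h1, _, _⟩ := hz
  simp only [pEval_mul, pEval_X0, wt]
  rw [← rpow_fold h1 ha]
  ring

lemma JJ_foldY {a b c : ℝ} (hb : -1 < b) (u v : MvPolynomial (Fin 2) ℝ) :
    JJ a (b+1) c u v = JJ a b c u (MvPolynomial.X 1 * v) := by
  rw [JJ, JJ]
  apply MeasureTheory.setIntegral_congr_fun Tri_meas
  intro z hz
  obtain ⟨_, h2, _⟩ := hz
  simp only [pEval_mul, pEval_X1, wt]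
  rw [← rpow_fold h2 hb]
  ring

lemma JJ_foldW {a b c : ℝ} (hc : -1 < c) (u v : MvPolynomial (Fin 2) ℝ) :
    JJ a b (c+1) u v = JJ a b c u ((1 - MvPolynomial.X 0 - MvPolynomial.X 1) * v) := by
  rw [JJ, JJ]
  apply MeasureTheory.setIntegral_congr_fun Tri_meas
  intro z hz
  obtain ⟨h1, h2, h3⟩ := hz
  have hw : (0:ℝ) ≤ 1 - z.1 - z.2 := by linarith [h3]
  simp only [pEval_mul, pEval_sub, pEval_X0, pEval_X1, pEval_one, wt]
  rw [← rpow_fold hw hc]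
  ring

lemma JJ_Cmul_right (a b c : ℝ) (r : ℝ) (u v : MvPolynomial (Fin 2) ℝ) :
    JJ a b c u (MvPolynomial.C r * v) = r * JJ a b c u v := by
  rw [JJ, JJ, ← MeasureTheory.integral_const_mul]
  apply MeasureTheory.setIntegral_congr_fun Tri_meas
  intro z _
  simp only [pEval_mul, pEval_C]
  ring

lemma JJ_sub_right {a b c : ℝ} (ha : -1 < a) (hb : -1 < b) (hc : -1 < c)
    (u v v' : MvPolynomial (Fin 2) ℝ) :
    JJ a b c u (v - v') = JJ a b c u v - JJ a b c u v' := by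
  have h : v - v' = v + MvPolynomial.C (-1 : ℝ) * v' := by
    rw [MvPolynomial.C_neg, map_one]
    ring
  rw [h, JJ_add_right ha hb hc, JJ_Cmul_right]
  ring

open MvPolynomial in
lemma pderiv_support_le {i : Fin 2} {q : MvPolynomial (Fin 2) ℝ} {m' : Fin 2 →₀ ℕ}
    (h : m' ∈ (pderiv i q).support) :
    (m'.sum fun _ e => e) + 1 ≤ q.totalDegree := by
  rw [mem_support_iff] at h
  rw [← support_sum_monomial_coeff q, map_sum] at h
  rw [coeff_sum] at h
  obtain ⟨m, hm, hne⟩ := Finset.exists_ne_zero_of_sum_ne_zero h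
  rw [pderiv_monomial, coeff_monomial] at hne
  by_cases he : m - Finsupp.single i 1 = m'
  · rw [if_pos he] at hne
    have hmi : m i ≠ 0 := by
      intro h0
      apply hne
      rw [h0]
      simp
    have hle : Finsupp.single i 1 ≤ m := by
      rw [Finsupp.single_le_iff]
      omega
    have hsum : (m.sum fun _ e => e) = (m'.sum fun _ e => e) + 1 := by
      rw [← he]
      have : m = (m - Finsupp.single i 1) + Finsupp.single i 1 := (tsub_add_cancel_of_le hle).symm
      conv_lhs => rw [this]
      rw [Finsupp.sum_add_index' (fun _ => rfl) (fun _ _ _ => rfl)]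
      rw [Finsupp.sum_single_index rfl]
    have := le_totalDegree hm
    omega
  · rw [if_neg he] at hne
    exact absurd rfl hne

open MvPolynomial in
lemma pderiv_deg {i : Fin 2} {q : MvPolynomial (Fin 2) ℝ} :
    pderiv i q = 0 ∨ (pderiv i q).totalDegree + 1 ≤ q.totalDegree := by
  by_cases h : pderiv i q = 0
  · exact Or.inl h
  · right
    have hne : (pderiv i q).support.Nonempty := support_nonempty.mpr h
    obtain ⟨m', hm', hsup⟩ := Finset.exists_mem_eq_sup _ hne (fun m => m.sum fun _ e => e)
    rw [totalDegree, hsup]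
    exact pderiv_support_le hm'

open MvPolynomial in
lemma pderiv_sub_deg (q : MvPolynomial (Fin 2) ℝ) :
    (pderiv 1 q - pderiv 0 q) = 0 ∨
      (pderiv 1 q - pderiv 0 q).totalDegree + 1 ≤ q.totalDegree := by
  rcases pderiv_deg (i := 1) (q := q) with h1 | h1 <;>
    rcases pderiv_deg (i := 0) (q := q) with h0 | h0
  · left; rw [h1, h0, sub_zero]
  · right; rw [h1, zero_sub, totalDegree_neg]; exact h0
  · right; rw [h0, sub_zero]; exact h1
  · right
    have h := totalDegree_sub (pderiv 1 q) (pderiv 0 q)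
    have hm : max (pderiv 1 q).totalDegree (pderiv 0 q).totalDegree + 1 ≤ q.totalDegree :=
      max_le h1 h0 |>.trans_eq rfl |> fun _ => by
        rcases max_cases (pderiv 1 q).totalDegree (pderiv 0 q).totalDegree with ⟨he, _⟩ | ⟨he, _⟩ <;>
          rw [he] <;> omega
    omega

open MvPolynomial in
lemma deg_one_sub : (1 - X 0 - X 1 : MvPolynomial (Fin 2) ℝ).totalDegree ≤ 1 := by
  apply le_trans (totalDegree_sub _ _)
  apply max_le _ (le_of_eq (totalDegree_X _))
  apply le_trans (totalDegree_sub _ _)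
  apply max_le
  · rw [totalDegree_one]; omega
  · exact le_of_eq (totalDegree_X _)

open MvPolynomial in
lemma degR {n : ℕ} (hn : 2 ≤ n) {q Dq A B A' B' : MvPolynomial (Fin 2) ℝ}
    (hq : q.totalDegree ≤ n - 2)
    (hDq : Dq = 0 ∨ Dq.totalDegree + 1 ≤ q.totalDegree)
    (hA : A.totalDegree ≤ 1) (hB : B.totalDegree ≤ 1)
    (hA' : A'.totalDegree ≤ 1) (hB' : B'.totalDegree ≤ 1) (r1 r2 : ℝ) :
    (A * (B * Dq) + C r1 * (A' * q) - C r2 * (B' * q)).totalDegree ≤ n - 1 := by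
  apply le_trans (totalDegree_sub _ _)
  apply max_le
  · apply le_trans (totalDegree_add _ _)
    apply max_le
    · rcases hDq with h | h
      · rw [h, mul_zero, mul_zero, totalDegree_zero]
        exact Nat.zero_le _
      · have e1 := totalDegree_mul A (B * Dq)
        have e2 := totalDegree_mul B Dq
        omega
    · have e1 := totalDegree_mul (C r1 : MvPolynomial (Fin 2) ℝ) (A' * q)
      have e2 := totalDegree_mul A' q
      have e3 : (C r1 : MvPolynomial (Fin 2) ℝ).totalDegree = 0 := totalDegree_C _
      omega
  · have e1 := totalDegree_mul (C r2 : MvPolynomial (Fin 2) ℝ) (B' * q)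
    have e2 := totalDegree_mul B' q
    have e3 : (C r2 : MvPolynomial (Fin 2) ℝ).totalDegree = 0 := totalDegree_C _
    omega

lemma normConst_ne_zero {a b c : ℝ} (ha : -1 < a) (hb : -1 < b) (hc : -1 < c) :
    normConst a b c ≠ 0 := by
  rw [normConst]
  have h1 : 0 < Real.Gamma (a + b + c + 3) := Real.Gamma_pos_of_pos (by linarith)
  have h2 : 0 < Real.Gamma (a + 1) := Real.Gamma_pos_of_pos (by linarith)
  have h3 : 0 < Real.Gamma (b + 1) := Real.Gamma_pos_of_pos (by linarith)
  have h4 : 0 < Real.Gamma (c + 1) := Real.Gamma_pos_of_pos (by linarith)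
  positivity

lemma wInner_eq_JJ (a b c : ℝ) (u v : MvPolynomial (Fin 2) ℝ) :
    wInner a b c (pEval u) (pEval v) = normConst a b c * JJ a b c u v := rfl

end Aux
theorem derivatives_of_orthogonal_polynomials (α β γ : ℝ)
    (hα : -1 < α) (hβ : -1 < β) (hγ : -1 < γ) (n : ℕ) (hn : 2 ≤ n)
    (P : MvPolynomial (Fin 2) ℝ) (hdeg : P.totalDegree = n)
    (horth : ∀ q : MvPolynomial (Fin 2) ℝ, q.totalDegree ≤ n - 1 →
      wInner α β γ (pEval P) (pEval q) = 0) :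
    (∀ q : MvPolynomial (Fin 2) ℝ, q.totalDegree ≤ n - 2 →
      wInner (α + 1) β (γ + 1) (pEval (MvPolynomial.pderiv 0 P)) (pEval q) = 0) ∧
    (∀ q : MvPolynomial (Fin 2) ℝ, q.totalDegree ≤ n - 2 →
      wInner α (β + 1) (γ + 1) (pEval (MvPolynomial.pderiv 1 P)) (pEval q) = 0) ∧
    (∀ q : MvPolynomial (Fin 2) ℝ, q.totalDegree ≤ n - 2 →
      wInner (α + 1) (β + 1) γ
        (pEval (MvPolynomial.pderiv 1 P - MvPolynomial.pderiv 0 P)) (pEval q) = 0) := by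
  classical
  have hC : normConst α β γ ≠ 0 := normConst_ne_zero hα hβ hγ
  have hX0 : (MvPolynomial.X 0 : MvPolynomial (Fin 2) ℝ).totalDegree ≤ 1 :=
    le_of_eq (MvPolynomial.totalDegree_X _)
  have hX1 : (MvPolynomial.X 1 : MvPolynomial (Fin 2) ℝ).totalDegree ≤ 1 :=
    le_of_eq (MvPolynomial.totalDegree_X _)
  refine ⟨?_, ?_, ?_⟩
  · intro q hq
    set R : MvPolynomial (Fin 2) ℝ :=
      MvPolynomial.X 0 * ((1 - MvPolynomial.X 0 - MvPolynomial.X 1) * MvPolynomial.pderiv 0 q)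
        + MvPolynomial.C (α+1) * ((1 - MvPolynomial.X 0 - MvPolynomial.X 1) * q)
        - MvPolynomial.C (γ+1) * (MvPolynomial.X 0 * q) with hR
    have hdegR : R.totalDegree ≤ n - 1 := by
      rw [hR]
      exact degR hn hq pderiv_deg hX0 deg_one_sub deg_one_sub hX0 _ _
    have h0 : JJ α β γ P R = 0 := by
      have h := horth R hdegR
      rw [wInner_eq_JJ] at h
      exact (mul_eq_zero.mp h).resolve_left hC
    have hkey := key1 hα hβ hγ P q
    have hfold : JJ (α+1) β (γ+1) P (MvPolynomial.pderiv 0 q)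
        + (α+1) * JJ α β (γ+1) P q - (γ+1) * JJ (α+1) β γ P q = JJ α β γ P R := by
      rw [JJ_foldW hγ P (MvPolynomial.pderiv 0 q),
        JJ_foldX hα P ((1 - MvPolynomial.X 0 - MvPolynomial.X 1) * MvPolynomial.pderiv 0 q),
        JJ_foldW hγ P q, JJ_foldX hα P q]
      rw [hR, JJ_sub_right hα hβ hγ, JJ_add_right hα hβ hγ, JJ_Cmul_right, JJ_Cmul_right]
    have hz : JJ (α+1) β (γ+1) (MvPolynomial.pderiv 0 P) q = 0 := by
      linarith [hkey, hfold, h0]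
    rw [wInner_eq_JJ, hz, mul_zero]
  · intro q hq
    set R : MvPolynomial (Fin 2) ℝ :=
      MvPolynomial.X 1 * ((1 - MvPolynomial.X 0 - MvPolynomial.X 1) * MvPolynomial.pderiv 1 q)
        + MvPolynomial.C (β+1) * ((1 - MvPolynomial.X 0 - MvPolynomial.X 1) * q)
        - MvPolynomial.C (γ+1) * (MvPolynomial.X 1 * q) with hR
    have hdegR : R.totalDegree ≤ n - 1 := by
      rw [hR]
      exact degR hn hq pderiv_deg hX1 deg_one_sub deg_one_sub hX1 _ _
    have h0 : JJ α β γ P R = 0 := by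
      have h := horth R hdegR
      rw [wInner_eq_JJ] at h
      exact (mul_eq_zero.mp h).resolve_left hC
    have hkey := key2 hα hβ hγ P q
    have hfold : JJ α (β+1) (γ+1) P (MvPolynomial.pderiv 1 q)
        + (β+1) * JJ α β (γ+1) P q - (γ+1) * JJ α (β+1) γ P q = JJ α β γ P R := by
      rw [JJ_foldW hγ P (MvPolynomial.pderiv 1 q),
        JJ_foldY hβ P ((1 - MvPolynomial.X 0 - MvPolynomial.X 1) * MvPolynomial.pderiv 1 q),
        JJ_foldW hγ P q, JJ_foldY hβ P q]
      rw [hR, JJ_sub_right hα hβ hγ, JJ_add_right hα hβ hγ, JJ_Cmul_right, JJ_Cmul_right]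
    have hz : JJ α (β+1) (γ+1) (MvPolynomial.pderiv 1 P) q = 0 := by
      linarith [hkey, hfold, h0]
    rw [wInner_eq_JJ, hz, mul_zero]
  · intro q hq
    set R : MvPolynomial (Fin 2) ℝ :=
      MvPolynomial.X 1 * (MvPolynomial.X 0 * (MvPolynomial.pderiv 1 q - MvPolynomial.pderiv 0 q))
        + MvPolynomial.C (β+1) * (MvPolynomial.X 0 * q)
        - MvPolynomial.C (α+1) * (MvPolynomial.X 1 * q) with hR
    have hdegR : R.totalDegree ≤ n - 1 := by
      rw [hR]
      exact degR hn hq (pderiv_sub_deg q) hX1 hX0 hX0 hX1 _ _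
    have h0 : JJ α β γ P R = 0 := by
      have h := horth R hdegR
      rw [wInner_eq_JJ] at h
      exact (mul_eq_zero.mp h).resolve_left hC
    have hkey := key3 hα hβ hγ P q
    have hfold : JJ (α+1) (β+1) γ P (MvPolynomial.pderiv 1 q - MvPolynomial.pderiv 0 q)
        + (β+1) * JJ (α+1) β γ P q - (α+1) * JJ α (β+1) γ P q = JJ α β γ P R := by
      rw [JJ_foldX hα P (MvPolynomial.pderiv 1 q - MvPolynomial.pderiv 0 q),
        JJ_foldY hβ P (MvPolynomial.X 0 * (MvPolynomial.pderiv 1 q - MvPolynomial.pderiv 0 q)),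
        JJ_foldX hα P q, JJ_foldY hβ P q]
      rw [hR, JJ_sub_right hα hβ hγ, JJ_add_right hα hβ hγ, JJ_Cmul_right, JJ_Cmul_right]
    have hz : JJ (α+1) (β+1) γ (MvPolynomial.pderiv 1 P - MvPolynomial.pderiv 0 P) q = 0 := by
      linarith [hkey, hfold, h0]
    rw [wInner_eq_JJ, hz, mul_zero]
end
end
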